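/- arXiv:1705.08565 — 10 statements merged into one kernel-verified Lean document; each statement's English description precedes it below -/
import Mathlib

section
/- Let D be a triangulated category with shift Σ. A morphism f in D is an isomorphism if and only if f is homotopy orthogonal to itself (where e ⊥ m means: completing e and m to triangles with cones C_e, C_m, the map D(C_e, Σ⁻¹C_m) → D(E₁, M₀), φ ↦ Σ⁻¹β_m ∘ φ ∘ α_e, is zero, and the map D(C_e, C_m) → D(E₁, ΣM₀), φ ↦ β_m ∘ φ ∘ α_e, is injective). -/
open CategoryTheory Category Limits Pretriangulated ZeroObject

universe v u w

section Defs

variable {D : Type u} [Category.{v} D] [HasZeroObject D] [Preadditive D]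
  [HasShift D ℤ] [∀ n : ℤ, (shiftFunctor D n).Additive] [Pretriangulated D]

/-- Homotopy orthogonality (Def. 1.1): conditions (HO1) and (HO2), stated for every
completion of `e` and `m` to distinguished triangles. -/
def HOrth {E₀ E₁ M₀ M₁ : D} (e : E₀ ⟶ E₁) (m : M₀ ⟶ M₁) : Prop :=
  ∀ (Ce : D) (αe : E₁ ⟶ Ce) (βe : Ce ⟶ E₀⟦(1:ℤ)⟧),
    Triangle.mk e αe βe ∈ (distTriang D) →
    ∀ (Cm : D) (αm : M₁ ⟶ Cm) (βm : Cm ⟶ M₀⟦(1:ℤ)⟧),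
      Triangle.mk m αm βm ∈ (distTriang D) →
      (∀ φ : Ce ⟶ Cm⟦(-1:ℤ)⟧,
        αe ≫ φ ≫ βm⟦(-1:ℤ)⟧' ≫
          (shiftFunctorCompIsoId D (1:ℤ) (-1:ℤ) (by omega)).hom.app M₀ = 0) ∧
      Function.Injective (fun φ : Ce ⟶ Cm => αe ≫ φ ≫ βm)

/-- The right homotopy-orthogonal class `E^⊥`. -/
def rightOrth (E : MorphismProperty D) : MorphismProperty D :=
  fun _ _ m => ∀ ⦃A B : D⦄ (e : A ⟶ B), E e → HOrth e m

/-- The left homotopy-orthogonal class `^⊥M`. -/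
def leftOrth (M : MorphismProperty D) : MorphismProperty D :=
  fun _ _ e => ∀ ⦃A B : D⦄ (m : A ⟶ B), M m → HOrth e m

/-- The 3-for-2 property for a class of morphisms. -/
def ThreeForTwo (P : MorphismProperty D) : Prop :=
  ∀ ⦃X Y Z : D⦄ (f : X ⟶ Y) (g : Y ⟶ Z),
    (P f → P g → P (f ≫ g)) ∧ (P f → P (f ≫ g) → P g) ∧ (P g → P (f ≫ g) → P f)

/-- A triangulated pre-factorization system (Def. 1.12(1)). -/
structure IsTriPFS (E M : MorphismProperty D) : Prop where
  right_eq : rightOrth E = M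
  left_eq : leftOrth M = E
  shiftE : ∀ ⦃X Y : D⦄ (f : X ⟶ Y), E f → E (f⟦(1:ℤ)⟧')

/-- A triangulated factorization system (Def. 1.12(2)). -/
structure IsTriFS (E M : MorphismProperty D) extends IsTriPFS E M : Prop where
  fact : ∀ ⦃X Y : D⦄ (f : X ⟶ Y),
    ∃ (P : D) (e : X ⟶ P) (m : P ⟶ Y), E e ∧ M m ∧ e ≫ m = f

/-- A normal triangulated torsion theory (Defs. 1.15, 1.16). -/
structure IsNormalTTT (E M : MorphismProperty D) extends IsTriFS E M : Prop where
  three_E : ThreeForTwo E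
  three_M : ThreeForTwo M
  normal : ∀ ⦃X T : D⦄ (e : X ⟶ T) (m : T ⟶ (0:D)), E e → M m →
    ∀ ⦃R : D⦄ (r : R ⟶ X) (δ : T ⟶ R⟦(1:ℤ)⟧),
      Triangle.mk r e δ ∈ (distTriang D) → E (0 : R ⟶ (0:D))

/-- A middling good morphism of triangles (Neeman): one extending to a 3×3 diagram
whose rows and columns are distinguished triangles, all squares commuting except
the lower-right one, which anticommutes. -/
def MiddlingGood {A₀ B₀ C₀ A₁ B₁ C₁ : D}
    (φ₀ : A₀ ⟶ B₀) (ψ₀ : B₀ ⟶ C₀) (δ₀ : C₀ ⟶ A₀⟦(1:ℤ)⟧)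
    (φ₁ : A₁ ⟶ B₁) (ψ₁ : B₁ ⟶ C₁) (δ₁ : C₁ ⟶ A₁⟦(1:ℤ)⟧)
    (a : A₀ ⟶ A₁) (b : B₀ ⟶ B₁) (c : C₀ ⟶ C₁) : Prop :=
  ∃ (Ca Cb Cc : D)
    (αa : A₁ ⟶ Ca) (βa : Ca ⟶ A₀⟦(1:ℤ)⟧)
    (αb : B₁ ⟶ Cb) (βb : Cb ⟶ B₀⟦(1:ℤ)⟧)
    (αc : C₁ ⟶ Cc) (βc : Cc ⟶ C₀⟦(1:ℤ)⟧)
    (fa : Ca ⟶ Cb) (fb : Cb ⟶ Cc) (δ : Cc ⟶ Ca⟦(1:ℤ)⟧),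
    Triangle.mk a αa βa ∈ (distTriang D) ∧
    Triangle.mk b αb βb ∈ (distTriang D) ∧
    Triangle.mk c αc βc ∈ (distTriang D) ∧
    Triangle.mk fa fb δ ∈ (distTriang D) ∧
    φ₁ ≫ αb = αa ≫ fa ∧
    ψ₁ ≫ αc = αb ≫ fb ∧
    δ₁ ≫ αa⟦(1:ℤ)⟧' = αc ≫ δ ∧
    βa ≫ φ₀⟦(1:ℤ)⟧' = fa ≫ βb ∧
    βb ≫ ψ₀⟦(1:ℤ)⟧' = fb ≫ βc ∧
    δ ≫ βa⟦(1:ℤ)⟧' = -(βc ≫ δ₀⟦(1:ℤ)⟧')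

end Defs

/-- A t-structure on a triangulated category (Def. 2.1), together with choices of the
truncation functors `τ^{≤0}` (right adjoint to the inclusion of `D^{≤0}`) and
`τ^{≥1}` (left adjoint to the inclusion of `D^{≥1}`).  Here `ge` is `D^{≥0}` and
membership of `X` in `D^{≥1} = Σ⁻¹ D^{≥0}` is expressed as `X⟦1⟧ ∈ ge`. -/
structure TData (D : Type u) [Category.{v} D] [HasZeroObject D] [Preadditive D]
    [HasShift D ℤ] [∀ n : ℤ, (shiftFunctor D n).Additive] [Pretriangulated D] where
  le : Set D
  ge : Set D
  le_iso : ∀ ⦃X Y : D⦄, (X ≅ Y) → X ∈ le → Y ∈ le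
  ge_iso : ∀ ⦃X Y : D⦄, (X ≅ Y) → X ∈ ge → Y ∈ ge
  shift_le : ∀ ⦃X : D⦄, X ∈ le → X⟦(1:ℤ)⟧ ∈ le
  shift_ge : ∀ ⦃X : D⦄, X⟦(1:ℤ)⟧ ∈ ge → X ∈ ge
  hom_zero : ∀ ⦃X Y : D⦄ (f : X ⟶ Y), X ∈ le → Y⟦(1:ℤ)⟧ ∈ ge → f = 0
  tri : ∀ X : D, ∃ (A B : D) (i : A ⟶ X) (p : X ⟶ B) (δ : B ⟶ A⟦(1:ℤ)⟧),
    A ∈ le ∧ B⟦(1:ℤ)⟧ ∈ ge ∧ Triangle.mk i p δ ∈ (distTriang D)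
  tle : D ⥤ D
  σ : tle ⟶ 𝟭 D
  tle_mem : ∀ X : D, tle.obj X ∈ le
  tle_univ : ∀ ⦃A : D⦄, A ∈ le → ∀ X : D,
    Function.Bijective (fun g : A ⟶ tle.obj X => g ≫ σ.app X)
  tge : D ⥤ D
  ρ : 𝟭 D ⟶ tge
  tge_mem : ∀ X : D, (tge.obj X)⟦(1:ℤ)⟧ ∈ ge
  tge_univ : ∀ X : D, ∀ ⦃B : D⦄, B⟦(1:ℤ)⟧ ∈ ge →
    Function.Bijective (fun g : tge.obj X ⟶ B => ρ.app X ≫ g)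

section TDefs

variable {D : Type u} [Category.{v} D] [HasZeroObject D] [Preadditive D]
  [HasShift D ℤ] [∀ n : ℤ, (shiftFunctor D n).Additive] [Pretriangulated D]

/-- `E_t`: morphisms `φ` with `τ^{≥1} φ` invertible. -/
def Et (t : TData D) : MorphismProperty D := fun _ _ φ => IsIso (t.tge.map φ)

/-- `M_t`: morphisms `φ` with `τ^{≤0} φ` invertible. -/
def Mt (t : TData D) : MorphismProperty D := fun _ _ φ => IsIso (t.tle.map φ)

end TDefs

section Statements

variable {D : Type u} [Category.{v} D] [HasZeroObject D] [Preadditive D]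
  [HasShift D ℤ] [∀ n : ℤ, (shiftFunctor D n).Additive] [Pretriangulated D]

/-- A morphism is an isomorphism iff it is homotopy orthogonal to itself (Lemma 1.3). -/
theorem iso_iff_self_homotopy_orthogonal {X Y : D} (f : X ⟶ Y) :
    IsIso f ↔ HOrth f f := by
  constructor
  · intro hf Ce αe βe hTe Cm αm βm hTm
    have hz : IsZero Ce := Triangle.isZero₃_of_isIso₁ _ hTe hf
    constructor
    · intro φ
      rw [hz.eq_of_src φ 0]
      simp
    · intro φ φ' _
      rw [hz.eq_of_src φ 0, hz.eq_of_src φ' 0]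
  · intro h
    obtain ⟨C, α, β, hT⟩ := distinguished_cocone_triangle f
    obtain ⟨-, hinj⟩ := h C α β hT C α β hT
    have hid : (𝟙 C) = 0 := by
      apply hinj
      have := comp_distTriang_mor_zero₂₃ _ hT
      simp only [Triangle.mk_mor₂, Triangle.mk_mor₃] at this
      simp [reassoc_of% this, this]
      exact this
    have hz : IsZero C := by rw [IsZero.iff_id_eq_zero]; exact hid
    exact (Triangle.isZero₃_iff_isIso₁ _ hT).1 hz

end Statements
end

section
/- Let D be a triangulated category and let e ⊥ m be homotopy orthogonal morphisms completed to triangles with cones C_e and C_m. Then condition (HO2) is equivalent to (HO2'): for every commutative square (a,b) : e → m in the arrow category, the unique morphism φ : C_e → C_m completing (a,b) to a morphism of triangles is zero. -/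
open CategoryTheory Category Limits Pretriangulated ZeroObject

universe v u w

section Statements

variable {D : Type u} [Category.{v} D] [HasZeroObject D] [Preadditive D]
  [HasShift D ℤ] [∀ n : ℤ, (shiftFunctor D n).Additive] [Pretriangulated D]

/-- (HO2) is equivalent to (HO2') (Remark 1.2). -/
theorem HO2_iff_HO2' {E₀ E₁ M₀ M₁ Ce Cm : D} (e : E₀ ⟶ E₁) (m : M₀ ⟶ M₁)
    (αe : E₁ ⟶ Ce) (βe : Ce ⟶ E₀⟦(1:ℤ)⟧)
    (hTe : Triangle.mk e αe βe ∈ (distTriang D))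
    (αm : M₁ ⟶ Cm) (βm : Cm ⟶ M₀⟦(1:ℤ)⟧)
    (hTm : Triangle.mk m αm βm ∈ (distTriang D)) :
    Function.Injective (fun φ : Ce ⟶ Cm => αe ≫ φ ≫ βm) ↔
      ∀ (a : E₀ ⟶ M₀) (b : E₁ ⟶ M₁) (φ : Ce ⟶ Cm),
        a ≫ m = e ≫ b → b ≫ αm = αe ≫ φ → φ ≫ βm = βe ≫ a⟦(1:ℤ)⟧' → φ = 0 := by
  constructor
  · intro hinj a b φ _ _ hφ
    apply hinj
    show αe ≫ φ ≫ βm = αe ≫ (0 : Ce ⟶ Cm) ≫ βm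
    have h0 : αe ≫ βe = 0 := comp_distTriang_mor_zero₂₃ _ hTe
    rw [hφ, ← assoc, h0, zero_comp, zero_comp, comp_zero]
  · intro h φ₁ φ₂ hφ
    simp only at hφ
    have hψ : αe ≫ (φ₁ - φ₂) ≫ βm = 0 := by
      rw [Preadditive.sub_comp, Preadditive.comp_sub, hφ, sub_self]
    -- find a : E₀ ⟶ M₀ with (φ₁ - φ₂) ≫ βm = βe ≫ a⟦1⟧'
    obtain ⟨g, hg⟩ := Triangle.yoneda_exact₂ _ (rot_of_distTriang _ hTe)
      ((φ₁ - φ₂) ≫ βm) (by exact hψ)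
    obtain ⟨a, rfl⟩ : ∃ a : E₀ ⟶ M₀, (shiftFunctor D (1:ℤ)).map a = g :=
      ⟨(shiftFunctor D (1:ℤ)).preimage g, Functor.map_preimage _ _⟩
    -- complete to a morphism of doubly rotated triangles
    obtain ⟨c, hc₁, hc₂⟩ := complete_distinguished_triangle_morphism
      (Triangle.mk e αe βe).rotate.rotate (Triangle.mk m αm βm).rotate.rotate
      (rot_of_distTriang _ (rot_of_distTriang _ hTe))
      (rot_of_distTriang _ (rot_of_distTriang _ hTm))
      (φ₁ - φ₂) (a⟦(1:ℤ)⟧') (by exact hg.symm)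
    dsimp only [Triangle.rotate, Triangle.mk] at hc₁ hc₂
    obtain ⟨b, rfl⟩ : ∃ b : E₁ ⟶ M₁, (shiftFunctor D (1:ℤ)).map b = c :=
      ⟨(shiftFunctor D (1:ℤ)).preimage c, Functor.map_preimage _ _⟩
    rw [Preadditive.neg_comp, Preadditive.comp_neg, neg_inj] at hc₁ hc₂
    have h1 : a ≫ m = e ≫ b := (shiftFunctor D (1:ℤ)).map_injective (by
      simp only [Functor.map_comp]
      exact hc₁.symm)
    have h2 : b ≫ αm = αe ≫ (φ₁ - φ₂) := (shiftFunctor D (1:ℤ)).map_injective (by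
      simp only [Functor.map_comp]
      exact hc₂.symm)
    have := h a b (φ₁ - φ₂) h1 h2 hg
    rwa [sub_eq_zero] at this

end Statements
end

section
/- Let D be a triangulated category with coproducts. If f_i ⊥ g for all i in an index set I (homotopy orthogonality), then the coproduct ∐_i f_i is homotopy orthogonal to g. Dually, if g ⊥ f_i for all i, then g ⊥ ∏_i f_i. -/
open CategoryTheory Category Limits Pretriangulated ZeroObject

universe v u w

section Statements

variable {D : Type u} [Category.{v} D] [HasZeroObject D] [Preadditive D]
  [HasShift D ℤ] [∀ n : ℤ, (shiftFunctor D n).Additive] [Pretriangulated D]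

/-- Homotopy orthogonality is stable under coproducts on the left and products on the
right (Lemma 1.6). -/
theorem homotopy_orthogonal_coprod_prod {I : Type w} {A B A' B' : I → D}
    (f : ∀ i, A i ⟶ B i) (f' : ∀ i, A' i ⟶ B' i) {G₀ G₁ : D} (g : G₀ ⟶ G₁)
    [HasCoproduct A] [HasCoproduct B] [HasProduct A'] [HasProduct B'] :
    ((∀ i, HOrth (f i) g) → HOrth (Limits.Sigma.map f) g) ∧
    ((∀ i, HOrth g (f' i)) → HOrth g (Limits.Pi.map f')) := by
  constructor
  · intro h Ce αe βe hTe Cm αm βm hTm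
    -- choose distinguished triangles on each `f i`
    obtain ⟨Cf, αf, βf, hTf⟩ :
        ∃ (Cf : I → D) (αf : ∀ i, B i ⟶ Cf i) (βf : ∀ i, Cf i ⟶ (A i)⟦(1:ℤ)⟧),
          ∀ i, Triangle.mk (f i) (αf i) (βf i) ∈ distTriang D := by
      have := fun i => distinguished_cocone_triangle (f i)
      choose Cf αf βf hTf using this
      exact ⟨Cf, αf, βf, hTf⟩
    -- maps between the cones
    obtain ⟨c, hc₁, hc₂⟩ :
        ∃ (c : ∀ i, Cf i ⟶ Ce),
          (∀ i, αf i ≫ c i = Sigma.ι B i ≫ αe) ∧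
          (∀ i, βf i ≫ (Sigma.ι A i)⟦(1:ℤ)⟧' = c i ≫ βe) := by
      have := fun i => complete_distinguished_triangle_morphism
        (Triangle.mk (f i) (αf i) (βf i)) (Triangle.mk (Limits.Sigma.map f) αe βe)
        (hTf i) hTe (Sigma.ι A i) (Sigma.ι B i) (Sigma.ι_map f i).symm
      choose c hc₁ hc₂ using this
      exact ⟨c, hc₁, hc₂⟩
    have key : ∀ φ : Ce ⟶ Cm, αe ≫ φ ≫ βm = 0 → φ = 0 := by
      intro φ hφ
      have h1 : ∀ i, c i ≫ φ = 0 := by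
        intro i
        apply ((h i) _ _ _ (hTf i) _ _ _ hTm).2
        show αf i ≫ (c i ≫ φ) ≫ βm = αf i ≫ (0 : Cf i ⟶ Cm) ≫ βm
        simp only [zero_comp, comp_zero, ← Category.assoc]
        rw [hc₁ i]
        simp only [Category.assoc]
        rw [hφ, comp_zero]
      have h2 : αe ≫ φ = 0 := by
        apply Sigma.hom_ext
        intro i
        rw [comp_zero, ← assoc, ← hc₁ i, assoc, h1 i, comp_zero]
      obtain ⟨ψ, hψ⟩ : ∃ ψ : (∐ A)⟦(1:ℤ)⟧ ⟶ Cm, φ = βe ≫ ψ :=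
        Triangle.yoneda_exact₃ _ hTe φ h2
      have h3 : ∀ i, βf i ≫ ((Sigma.ι A i)⟦(1:ℤ)⟧' ≫ ψ) = 0 := by
        intro i
        rw [← assoc, hc₂ i, assoc, ← hψ, h1 i]
      have h4 : ∀ i, ∃ k : (B i)⟦(1:ℤ)⟧ ⟶ Cm,
          (Sigma.ι A i)⟦(1:ℤ)⟧' ≫ ψ = (-(f i)⟦(1:ℤ)⟧') ≫ k :=
        fun i => Triangle.yoneda_exact₃ _ (rot_of_distTriang _ (hTf i))
        ((Sigma.ι A i)⟦(1:ℤ)⟧' ≫ ψ) (h3 i)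
      choose k hk using h4
      have hcB : IsColimit (Cofan.mk ((∐ B)⟦(1:ℤ)⟧)
          (fun i => (Sigma.ι B i)⟦(1:ℤ)⟧')) :=
        isColimitOfHasCoproductOfPreservesColimit (shiftFunctor D (1:ℤ)) B
      have hcA : IsColimit (Cofan.mk ((∐ A)⟦(1:ℤ)⟧)
          (fun i => (Sigma.ι A i)⟦(1:ℤ)⟧')) :=
        isColimitOfHasCoproductOfPreservesColimit (shiftFunctor D (1:ℤ)) A
      let k' : (∐ B)⟦(1:ℤ)⟧ ⟶ Cm := hcB.desc (Cofan.mk Cm (fun i => -(k i)))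
      have hk' : ∀ i, (Sigma.ι B i)⟦(1:ℤ)⟧' ≫ k' = -(k i) :=
        fun i => hcB.fac (Cofan.mk Cm (fun i => -(k i))) ⟨i⟩
      have h5 : ψ = (Limits.Sigma.map f)⟦(1:ℤ)⟧' ≫ k' := by
        apply hcA.hom_ext
        rintro ⟨i⟩
        have : (Sigma.ι A i ≫ Limits.Sigma.map f)⟦(1:ℤ)⟧' = (f i ≫ Sigma.ι B i)⟦(1:ℤ)⟧' := by
          congr 1; simp
        dsimp [Cofan.mk]
        rw [hk i, ← assoc, ← Functor.map_comp, this, Functor.map_comp, assoc, hk' i]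
        rw [Preadditive.comp_neg, Preadditive.neg_comp]
      rw [hψ, h5, ← assoc]
      have : βe ≫ (Limits.Sigma.map f)⟦(1:ℤ)⟧' = 0 := comp_distTriang_mor_zero₃₁ _ hTe
      rw [this, zero_comp]
    refine ⟨?_, ?_⟩
    · intro φ
      apply Sigma.hom_ext
      intro i
      rw [comp_zero, ← assoc, ← hc₁ i, assoc]
      have := ((h i) _ _ _ (hTf i) _ _ _ hTm).1 (c i ≫ φ)
      simpa using this
    · intro φ₁ φ₂ h12
      have : αe ≫ (φ₁ - φ₂) ≫ βm = 0 := by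
        rw [Preadditive.sub_comp, Preadditive.comp_sub, sub_eq_zero]
        exact h12
      have := key _ this
      rwa [sub_eq_zero] at this
  · intro h Ce αe βe hTe Cm αm βm hTm
    obtain ⟨Cf, αf, βf, hTf⟩ :
        ∃ (Cf : I → D) (αf : ∀ i, B' i ⟶ Cf i) (βf : ∀ i, Cf i ⟶ (A' i)⟦(1:ℤ)⟧),
          ∀ i, Triangle.mk (f' i) (αf i) (βf i) ∈ distTriang D := by
      have := fun i => distinguished_cocone_triangle (f' i)
      choose Cf αf βf hTf using this
      exact ⟨Cf, αf, βf, hTf⟩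
    obtain ⟨c, hc₁, hc₂⟩ :
        ∃ (c : ∀ i, Cm ⟶ Cf i),
          (∀ i, αm ≫ c i = Pi.π B' i ≫ αf i) ∧
          (∀ i, βm ≫ (Pi.π A' i)⟦(1:ℤ)⟧' = c i ≫ βf i) := by
      have := fun i => complete_distinguished_triangle_morphism
        (Triangle.mk (Limits.Pi.map f') αm βm) (Triangle.mk (f' i) (αf i) (βf i))
        hTm (hTf i) (Pi.π A' i) (Pi.π B' i) (Pi.map_π f' i)
      choose c hc₁ hc₂ using this
      exact ⟨c, hc₁, hc₂⟩
    have hpA : IsLimit (Fan.mk ((∏ᶜ A')⟦(1:ℤ)⟧)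
        (fun i => (Pi.π A' i)⟦(1:ℤ)⟧')) :=
      isLimitOfHasProductOfPreservesLimit (shiftFunctor D (1:ℤ)) A'
    have key : ∀ φ : Ce ⟶ Cm, αe ≫ φ ≫ βm = 0 → φ = 0 := by
      intro φ hφ
      have h1 : ∀ i, φ ≫ c i = 0 := by
        intro i
        apply ((h i) _ _ _ hTe _ _ _ (hTf i)).2
        show αe ≫ (φ ≫ c i) ≫ βf i = αe ≫ (0 : Ce ⟶ Cf i) ≫ βf i
        simp only [zero_comp, comp_zero, Category.assoc]
        rw [← hc₂ i, reassoc_of% hφ, zero_comp]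
      have h2 : φ ≫ βm = 0 := by
        apply hpA.hom_ext
        rintro ⟨i⟩
        dsimp [Fan.mk]
        rw [zero_comp, assoc, hc₂ i, ← assoc, h1 i, zero_comp]
      obtain ⟨ψ, hψ⟩ : ∃ ψ : Ce ⟶ ∏ᶜ B', φ = ψ ≫ αm :=
        Triangle.coyoneda_exact₃ _ hTm φ h2
      have h3 : ∀ i, (ψ ≫ Pi.π B' i) ≫ αf i = 0 := by
        intro i
        rw [assoc, ← hc₁ i, ← assoc, ← hψ, h1 i]
      have h4 : ∀ i, ∃ θi : Ce ⟶ A' i, ψ ≫ Pi.π B' i = θi ≫ f' i :=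
        fun i => Triangle.coyoneda_exact₂ _ (hTf i) (ψ ≫ Pi.π B' i) (h3 i)
      choose θ hθ using h4
      have h5 : ψ = Pi.lift θ ≫ Limits.Pi.map f' := by
        apply Pi.hom_ext
        intro i
        rw [assoc]
        have h6 : Limits.Pi.map f' ≫ Pi.π B' i = Pi.π A' i ≫ f' i := by simp
        rw [h6, ← assoc, limit.lift_π]
        exact hθ i
      rw [hψ, h5, assoc]
      have : Limits.Pi.map f' ≫ αm = 0 := comp_distTriang_mor_zero₁₂ _ hTm
      rw [this, comp_zero]
    refine ⟨?_, ?_⟩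
    · intro φ
      apply Pi.hom_ext
      intro i
      have nat := (shiftFunctorCompIsoId D (1:ℤ) (-1:ℤ)
        (by omega)).hom.naturality (Pi.π A' i)
      dsimp at nat
      rw [zero_comp, assoc, assoc, assoc, ← nat, ← assoc (βm⟦(-1:ℤ)⟧'),
        ← Functor.map_comp, hc₂ i, Functor.map_comp]
      have := ((h i) _ _ _ hTe _ _ _ (hTf i)).1 (φ ≫ (c i)⟦(-1:ℤ)⟧')
      simp only [assoc] at this ⊢
      exact this
    · intro φ₁ φ₂ h12
      have : αe ≫ (φ₁ - φ₂) ≫ βm = 0 := by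
        rw [Preadditive.sub_comp, Preadditive.comp_sub, sub_eq_zero]
        exact h12
      have := key _ this
      rwa [sub_eq_zero] at this

end Statements
end

section
/- Let D be a triangulated category, f, g morphisms in D, and f' a retract of f in the arrow category (i.e., there are morphisms i : f' → f and p : f → f' in D² with p ∘ i = id_{f'}). If f ⊥ g (homotopy orthogonality) then f' ⊥ g. -/
open CategoryTheory Category Limits Pretriangulated ZeroObject

universe v u w

section Statements

variable {D : Type u} [Category.{v} D] [HasZeroObject D] [Preadditive D]
  [HasShift D ℤ] [∀ n : ℤ, (shiftFunctor D n).Additive] [Pretriangulated D]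

/-- Homotopy orthogonality on the left is stable under retracts (Lemma 1.7). -/
theorem homotopy_orthogonal_of_retract {F₀ F₁ F₀' F₁' G₀ G₁ : D}
    (f : F₀ ⟶ F₁) (f' : F₀' ⟶ F₁') (g : G₀ ⟶ G₁)
    (i₀ : F₀' ⟶ F₀) (i₁ : F₁' ⟶ F₁) (p₀ : F₀ ⟶ F₀') (p₁ : F₁ ⟶ F₁')
    (hi : i₀ ≫ f = f' ≫ i₁) (hp : p₀ ≫ f' = f ≫ p₁)
    (hr₀ : i₀ ≫ p₀ = 𝟙 F₀') (hr₁ : i₁ ≫ p₁ = 𝟙 F₁')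
    (h : HOrth f g) : HOrth f' g := by
  intro Ce' αe' βe' hT' Cm αm βm hTm
  obtain ⟨Ce, αe, βe, hT⟩ := distinguished_cocone_triangle f
  obtain ⟨hf1, hf2⟩ := h Ce αe βe hT Cm αm βm hTm
  obtain ⟨j, hj1, hj2⟩ : ∃ j : Ce' ⟶ Ce, αe' ≫ j = i₁ ≫ αe ∧ βe' ≫ i₀⟦(1:ℤ)⟧' = j ≫ βe :=
    complete_distinguished_triangle_morphism
    (Triangle.mk f' αe' βe') (Triangle.mk f αe βe) hT' hT i₀ i₁ hi.symm
  obtain ⟨q, hq1, hq2⟩ : ∃ q : Ce ⟶ Ce', αe ≫ q = p₁ ≫ αe' ∧ βe ≫ p₀⟦(1:ℤ)⟧' = q ≫ βe' :=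
    complete_distinguished_triangle_morphism
    (Triangle.mk f αe βe) (Triangle.mk f' αe' βe') hT hT' p₀ p₁ hp.symm
  have hkey : i₁ ≫ αe ≫ q = αe' := by
    rw [hq1, ← assoc, hr₁, id_comp]
  constructor
  · intro φ
    have := hf1 (q ≫ φ)
    calc αe' ≫ φ ≫ βm⟦(-1:ℤ)⟧' ≫
          (shiftFunctorCompIsoId D (1:ℤ) (-1:ℤ) (by omega)).hom.app G₀
        = i₁ ≫ (αe ≫ (q ≫ φ) ≫ βm⟦(-1:ℤ)⟧' ≫
          (shiftFunctorCompIsoId D (1:ℤ) (-1:ℤ) (by omega)).hom.app G₀) := by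
          rw [← hkey]; simp only [assoc]
      _ = 0 := by rw [this, comp_zero]
  · intro φ ψ hφψ
    dsimp at hφψ
    set x := φ - ψ with hx
    suffices hx0 : x = 0 by
      have := sub_eq_zero.mp hx0
      exact this
    have hxm : αe' ≫ x ≫ βm = 0 := by
      simp only [hx, Preadditive.sub_comp, Preadditive.comp_sub, hφψ, sub_self]
    -- q ≫ x = 0 by (HO2) for f
    have hqx : q ≫ x = 0 := by
      apply hf2
      show αe ≫ (q ≫ x) ≫ βm = αe ≫ (0 : Ce ⟶ Cm) ≫ βm
      rw [zero_comp, comp_zero]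
      calc αe ≫ (q ≫ x) ≫ βm = p₁ ≫ αe' ≫ x ≫ βm := by
            rw [← assoc, ← assoc, hq1, assoc, assoc]
        _ = 0 := by rw [hxm, comp_zero]
    -- αe' ≫ x = 0
    have hax : αe' ≫ x = 0 := by
      rw [← hkey]
      simp only [assoc]
      rw [hqx, comp_zero, comp_zero]
    -- factor x through βe'
    obtain ⟨θ, hθ⟩ : ∃ θ : F₀'⟦(1:ℤ)⟧ ⟶ Cm, x = βe' ≫ θ :=
      Triangle.yoneda_exact₃ _ hT' x hax
    -- βe ≫ (p₀⟦1⟧' ≫ θ) = 0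
    have hψ' : βe ≫ p₀⟦(1:ℤ)⟧' ≫ θ = 0 := by
      rw [← assoc, hq2, assoc, ← hθ, hqx]
    -- factor p₀⟦1⟧' ≫ θ through f⟦1⟧' using the rotated triangle of T
    obtain ⟨χ, hχ⟩ : ∃ χ : F₁⟦(1:ℤ)⟧ ⟶ Cm, p₀⟦(1:ℤ)⟧' ≫ θ = (-f⟦(1:ℤ)⟧') ≫ χ :=
      Triangle.yoneda_exact₃ _ (rot_of_distTriang _ hT)
      (p₀⟦(1:ℤ)⟧' ≫ θ) hψ'
    -- θ = i₀⟦1⟧' ≫ p₀⟦1⟧' ≫ θ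
    have hθ' : θ = i₀⟦(1:ℤ)⟧' ≫ p₀⟦(1:ℤ)⟧' ≫ θ := by
      rw [← assoc, ← Functor.map_comp, hr₀, CategoryTheory.Functor.map_id, id_comp]
    have hz : βe' ≫ f'⟦(1:ℤ)⟧' = 0 :=
      comp_distTriang_mor_zero₃₁ _ hT'
    rw [hθ, hθ', hχ]
    simp only [Preadditive.neg_comp, Preadditive.comp_neg, neg_eq_zero]
    calc βe' ≫ i₀⟦(1:ℤ)⟧' ≫ f⟦(1:ℤ)⟧' ≫ χ
        = βe' ≫ (i₀ ≫ f)⟦(1:ℤ)⟧' ≫ χ := by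
          rw [Functor.map_comp]; simp only [assoc]
      _ = (βe' ≫ f'⟦(1:ℤ)⟧') ≫ i₁⟦(1:ℤ)⟧' ≫ χ := by
          rw [hi, Functor.map_comp]; simp only [assoc]
      _ = 0 := by rw [hz, zero_comp]

end Statements
end

section
/- Let D be a triangulated category, ψ a morphism in D, and consider a homotopy cartesian square with left edge φ : X₀ → X₁ and right edge φ' : X'₀ → X'₁ (so φ' is a homotopy pushout of φ). If both φ ⊥ ψ and φ ⊥ Σ⁻¹ψ hold (homotopy orthogonality), then φ' ⊥ ψ. -/
open CategoryTheory Category Limits Pretriangulated ZeroObject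

universe v u w

section Statements

variable {D : Type u} [Category.{v} D] [HasZeroObject D] [Preadditive D]
  [HasShift D ℤ] [∀ n : ℤ, (shiftFunctor D n).Additive] [Pretriangulated D]

/-- Auxiliary: a neg-identity isomorphism. -/
@[simps]
def negIso {D : Type u} [Category.{v} D] [Preadditive D] (X : D) : X ≅ X where
  hom := -𝟙 X
  inv := -𝟙 X
  hom_inv_id := by simp
  inv_hom_id := by simp

set_option maxHeartbeats 1000000

lemma shift_neg_one_distinguished {D : Type u} [Category.{v} D] [HasZeroObject D] [Preadditive D]
    [HasShift D ℤ] [∀ n : ℤ, (shiftFunctor D n).Additive] [Pretriangulated D]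
    {A B Z : D} (u : A ⟶ B) (v : B ⟶ Z) (w : Z ⟶ A⟦(1:ℤ)⟧)
    (hT : Triangle.mk u v w ∈ distTriang D) :
    Triangle.mk (u⟦(-1:ℤ)⟧') (v⟦(-1:ℤ)⟧')
      (-(w⟦(-1:ℤ)⟧' ≫ (shiftFunctorComm D (1:ℤ) (-1:ℤ)).hom.app A)) ∈ distTriang D := by
  refine isomorphic_distinguished _ (Triangle.shift_distinguished _ hT (-1)) _ ?_
  refine Triangle.isoMk _ _ (negIso _) (Iso.refl _) (negIso _) ?_ ?_ ?_
  · change (u⟦(-1:ℤ)⟧') ≫ 𝟙 (B⟦(-1:ℤ)⟧) = (-𝟙 (A⟦(-1:ℤ)⟧)) ≫ ((-1:ℤ).negOnePow • u⟦(-1:ℤ)⟧')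
    simp [Int.negOnePow_neg, Int.negOnePow_one, Units.neg_smul, one_smul,
      Functor.map_neg, Functor.map_id]
  · change (v⟦(-1:ℤ)⟧') ≫ (-𝟙 (Z⟦(-1:ℤ)⟧)) = 𝟙 (B⟦(-1:ℤ)⟧) ≫ ((-1:ℤ).negOnePow • v⟦(-1:ℤ)⟧')
    simp [Int.negOnePow_neg, Int.negOnePow_one, Units.neg_smul, one_smul,
      Functor.map_neg, Functor.map_id]
  · change (-(w⟦(-1:ℤ)⟧' ≫ (shiftFunctorComm D (1:ℤ) (-1:ℤ)).hom.app A)) ≫ (-𝟙 (A⟦(-1:ℤ)⟧))⟦(1:ℤ)⟧' =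
      (-𝟙 (Z⟦(-1:ℤ)⟧)) ≫ ((-1:ℤ).negOnePow • w⟦(-1:ℤ)⟧' ≫ (shiftFunctorComm D (1:ℤ) (-1:ℤ)).hom.app A)
    simp [Int.negOnePow_neg, Int.negOnePow_one, Units.neg_smul, one_smul,
      Functor.map_neg, Functor.map_id]

/-- Homotopy pushouts preserve left homotopy orthogonality (Lemma 1.9(3)). -/
theorem homotopy_orthogonal_of_homotopy_pushout [HasBinaryBiproducts D]
    {X₀ X₁ X₀' X₁' Y₀ Y₁ : D}
    (φ : X₀ ⟶ X₁) (s : X₀ ⟶ X₀') (t : X₁ ⟶ X₁') (φ' : X₀' ⟶ X₁') (ψ : Y₀ ⟶ Y₁)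
    (δ : X₁' ⟶ X₀⟦(1:ℤ)⟧)
    (hT : Triangle.mk (biprod.lift φ (-s)) (biprod.desc t φ') δ ∈ (distTriang D))
    (h1 : HOrth φ ψ) (h2 : HOrth φ (ψ⟦(-1:ℤ)⟧')) :
    HOrth φ' ψ := by
  intro C' α' β' hT' Cm αm βm hTm
  -- Step 0: choose a distinguished triangle on φ
  obtain ⟨C, α, β, hT0⟩ := distinguished_cocone_triangle φ
  -- the square commutes
  have hcomm : φ ≫ t = s ≫ φ' := by
    have h := comp_distTriang_mor_zero₁₂ _ hT
    change biprod.lift φ (-s) ≫ biprod.desc t φ' = 0 at h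
    rw [biprod.lift_desc, Preadditive.neg_comp, ← sub_eq_add_neg, sub_eq_zero] at h
    exact h
  -- TR3 : map of cones c : C ⟶ C'
  obtain ⟨c, hc₁, hc₂⟩ : ∃ c : C ⟶ C', α ≫ c = t ≫ α' ∧ β ≫ s⟦(1:ℤ)⟧' = c ≫ β' :=
    complete_distinguished_triangle_morphism
    (Triangle.mk φ α β) (Triangle.mk φ' α' β') hT0 hT' s t hcomm
  -- TR3 : map d : X₁' ⟶ C with t ≫ d = α, φ' ≫ d = 0, δ = d ≫ β
  obtain ⟨d, hd₁, hd₂⟩ : ∃ d : X₁' ⟶ C, biprod.desc t φ' ≫ d = biprod.fst ≫ α ∧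
      δ ≫ (𝟙 X₀)⟦(1:ℤ)⟧' = d ≫ β := complete_distinguished_triangle_morphism
    (Triangle.mk (biprod.lift φ (-s)) (biprod.desc t φ') δ) (Triangle.mk φ α β)
    hT hT0 (𝟙 X₀) biprod.fst ((biprod.lift_fst _ _).trans (id_comp φ).symm)
  have hδ : δ = d ≫ β := by simpa using hd₂
  have htd : t ≫ d = α := by
    have h := biprod.inl ≫= hd₁
    simpa using h
  have hφ'd : φ' ≫ d = 0 := by
    have h := biprod.inr ≫= hd₁
    simpa using h
  have hφα : φ' ≫ α' = 0 := comp_distTriang_mor_zero₁₂ _ hT'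
  have hβφ : β' ≫ φ'⟦(1:ℤ)⟧' = 0 := comp_distTriang_mor_zero₃₁ _ hT'
  -- key lemma
  have key : ∀ {Z W : D} (B : Z ⟶ W), (∀ x : C ⟶ Z, α ≫ x ≫ B = 0 → x = 0) →
      ∀ γ : C' ⟶ Z, α ≫ c ≫ γ ≫ B = 0 → c ≫ γ = 0 ∧ α' ≫ γ = 0 := by
    intro Z W B O γ hγ
    have hcγ : c ≫ γ = 0 := O (c ≫ γ) (by simpa [Category.assoc] using hγ)
    have h2' : (Triangle.mk (biprod.lift φ (-s)) (biprod.desc t φ') δ).mor₂ ≫ (α' ≫ γ) = 0 := by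
      change biprod.desc t φ' ≫ (α' ≫ γ) = 0
      apply biprod.hom_ext'
      · simp only [biprod.inl_desc_assoc, comp_zero]
        rw [← Category.assoc, ← hc₁, Category.assoc, hcγ, comp_zero]
      · simp only [biprod.inr_desc_assoc, comp_zero]
        rw [← Category.assoc, hφα, zero_comp]
    obtain ⟨ρ, hρ⟩ : ∃ ρ : X₀⟦(1:ℤ)⟧ ⟶ Z, α' ≫ γ = δ ≫ ρ := Triangle.yoneda_exact₃ _ hT (α' ≫ γ) h2'
    have hβρ : β ≫ ρ = 0 := by
      apply O
      have hz : α ≫ β = 0 := comp_distTriang_mor_zero₂₃ _ hT0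
      have ha : α ≫ (β ≫ ρ) ≫ B = ((α ≫ β) ≫ ρ) ≫ B := by
        simp only [Category.assoc]
      rw [ha, hz, zero_comp, zero_comp]
    refine ⟨hcγ, ?_⟩
    rw [hρ]
    rw [hδ, Category.assoc, hβρ, comp_zero]
  -- a distinguished triangle on ψ⟦-1⟧ with cone Cm⟦-1⟧
  have hM : Triangle.mk (ψ⟦(-1:ℤ)⟧') (αm⟦(-1:ℤ)⟧')
      (-(βm⟦(-1:ℤ)⟧' ≫ (shiftFunctorComm D (1:ℤ) (-1:ℤ)).hom.app Y₀)) ∈ distTriang D :=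
    shift_neg_one_distinguished ψ αm βm hTm
  -- extract the four conditions
  obtain ⟨hA1, hA2⟩ := h1 C α β hT0 Cm αm βm hTm
  obtain ⟨hB1, hB2⟩ := h2 C α β hT0 (Cm⟦(-1:ℤ)⟧) (αm⟦(-1:ℤ)⟧')
    (-(βm⟦(-1:ℤ)⟧' ≫ (shiftFunctorComm D (1:ℤ) (-1:ℤ)).hom.app Y₀)) hM
  have O2 : ∀ x : C ⟶ Cm, α ≫ x ≫ βm = 0 → x = 0 := by
    intro x hx
    apply hA2 (a₂ := 0)
    simpa using hx
  have O1 : ∀ x : C ⟶ (Cm⟦(-1:ℤ)⟧),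
      α ≫ x ≫ (-(βm⟦(-1:ℤ)⟧' ≫ (shiftFunctorComm D (1:ℤ) (-1:ℤ)).hom.app Y₀)) = 0 → x = 0 := by
    intro x hx
    apply hB2 (a₂ := 0)
    simpa using hx
  constructor
  · -- (HO1)
    intro γ
    have hx : α ≫ c ≫ γ ≫ βm⟦(-1:ℤ)⟧' = 0 := by
      have h := hA1 (c ≫ γ)
      rw [← cancel_mono ((shiftFunctorCompIsoId D (1:ℤ) (-1:ℤ) (by omega)).hom.app Y₀)]
      simpa [Category.assoc] using h
    have hγB : α ≫ c ≫ γ ≫ (-(βm⟦(-1:ℤ)⟧' ≫ (shiftFunctorComm D (1:ℤ) (-1:ℤ)).hom.app Y₀)) = 0 := by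
      have h := hx =≫ ((shiftFunctorComm D (1:ℤ) (-1:ℤ)).hom.app Y₀)
      simp only [Category.assoc, zero_comp] at h
      simp only [Preadditive.comp_neg, neg_eq_zero, Category.assoc]
      exact h
    obtain ⟨-, h0⟩ := key _ O1 γ hγB
    rw [← Category.assoc, h0, zero_comp]
  · -- (HO2)
    have hker : ∀ γ : C' ⟶ Cm, α' ≫ γ ≫ βm = 0 → γ = 0 := by
      intro γ hγ0
      have hγB : α ≫ c ≫ γ ≫ βm = 0 := by
        have h := t ≫= hγ0
        rw [comp_zero, ← Category.assoc, ← hc₁] at h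
        simpa [Category.assoc] using h
      obtain ⟨hcγ, hαγ⟩ := key βm O2 γ hγB
      obtain ⟨k, hk⟩ : ∃ k : X₀'⟦(1:ℤ)⟧ ⟶ Cm, γ = β' ≫ k :=
        Triangle.yoneda_exact₃ _ hT' γ (by exact hαγ)
      have h5 : β ≫ s⟦(1:ℤ)⟧' ≫ k = 0 := by
        have h := hc₂ =≫ k
        rw [Category.assoc, Category.assoc, ← hk, hcγ] at h
        exact h
      obtain ⟨l, hl⟩ : ∃ l : X₁⟦(1:ℤ)⟧ ⟶ Cm, s⟦(1:ℤ)⟧' ≫ k = (-(φ⟦(1:ℤ)⟧')) ≫ l :=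
        Triangle.yoneda_exact₃ _ (rot_of_distTriang _ hT0)
        (s⟦(1:ℤ)⟧' ≫ k) (by exact h5)
      -- assemble the map on the shifted biproduct
      haveI := preservesBinaryBiproducts_of_preservesBiproducts (shiftFunctor D (1:ℤ))
      have h6 : (shiftFunctor D (1:ℤ)).map (biprod.lift φ (-s)) ≫
          (((shiftFunctor D (1:ℤ)).mapBiprod X₁ X₀').hom ≫ biprod.desc (-l) k) = 0 := by
        rw [← Category.assoc, biprod.map_lift_mapBiprod, biprod.lift_desc, Functor.map_neg,
          Preadditive.comp_neg, Preadditive.neg_comp, hl, Preadditive.neg_comp, neg_neg, neg_add_cancel]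
      obtain ⟨L, hL⟩ : ∃ L : X₁'⟦(1:ℤ)⟧ ⟶ Cm, ((shiftFunctor D (1:ℤ)).mapBiprod X₁ X₀').hom ≫ biprod.desc (-l) k =
          (-((biprod.desc t φ')⟦(1:ℤ)⟧')) ≫ L := Triangle.yoneda_exact₃ _ (rot_of_distTriang _ (rot_of_distTriang _ hT))
        ((((shiftFunctor D (1:ℤ)).mapBiprod X₁ X₀').hom ≫ biprod.desc (-l) k))
        (by
          change (-((biprod.lift φ (-s))⟦(1:ℤ)⟧')) ≫
            (((shiftFunctor D (1:ℤ)).mapBiprod X₁ X₀').hom ≫ biprod.desc (-l) k) = 0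
          rw [Preadditive.neg_comp, h6, neg_zero])
      have hinr : (shiftFunctor D (1:ℤ)).map biprod.inr ≫
          ((shiftFunctor D (1:ℤ)).mapBiprod X₁ X₀').hom = biprod.inr := by
        rw [Functor.mapBiprod_hom]
        apply biprod.hom_ext
        · simp [← Functor.map_comp]
        · simp [← Functor.map_comp]
      have h8 : k = -(φ'⟦(1:ℤ)⟧' ≫ L) := by
        have h := (shiftFunctor D (1:ℤ)).map biprod.inr ≫= hL
        rw [← Category.assoc, hinr, biprod.inr_desc] at h
        rw [h, Preadditive.neg_comp, Preadditive.comp_neg, ← Category.assoc, ← Functor.map_comp, biprod.inr_desc]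
      rw [hk, h8, Preadditive.comp_neg, ← Category.assoc, hβφ, zero_comp, neg_zero]
    intro γ₁ γ₂ he
    simp only at he
    have h := hker (γ₁ - γ₂) (by
      simp only [Preadditive.sub_comp, Preadditive.comp_sub, he, sub_self])
    rw [← sub_eq_zero]
    exact h

end Statements
end

section
/- Let D be a triangulated category, χ a morphism in D, and (a,b,c) : (φ₀,ψ₀) → (φ₁,ψ₁) a middling good morphism of distinguished triangles (one that extends to a 3×3 diagram of triangles). If a ⊥ χ, Σa ⊥ χ, c ⊥ χ, Σc ⊥ χ, and Σ⁻¹c ⊥ χ (homotopy orthogonality), then b ⊥ χ. -/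
open CategoryTheory Category Limits Pretriangulated ZeroObject

universe v u w

section MyHelpers

variable {D : Type u} [Category.{v} D] [HasZeroObject D] [Preadditive D]
  [HasShift D ℤ] [∀ n : ℤ, (shiftFunctor D n).Additive] [Pretriangulated D]

/-- An auxiliary isomorphism given by `-𝟙`. -/
def myNegRefl (X : D) : X ≅ X where
  hom := -𝟙 X
  inv := -𝟙 X
  hom_inv_id := by simp
  inv_hom_id := by simp

/-- For `n` with `(-1)^n = -1`, the shift by `n` of a distinguished triangle,
normalized so that the first two maps carry no sign. -/
lemma my_shift_mk_dist_neg {X Y Cf : D} (f : X ⟶ Y) (α : Y ⟶ Cf) (β : Cf ⟶ X⟦(1:ℤ)⟧)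
    (h : Triangle.mk f α β ∈ distTriang D) (n : ℤ) (hn : n.negOnePow = -1) :
    Triangle.mk (f⟦n⟧') (α⟦n⟧')
      (-(β⟦n⟧' ≫ (shiftFunctorComm D 1 n).hom.app X)) ∈ distTriang D := by
  refine isomorphic_distinguished _ (Triangle.shift_distinguished _ h n) _ ?_
  refine Triangle.isoMk _ _ (myNegRefl _) (Iso.refl _) (myNegRefl _) ?_ ?_ ?_
  · show f⟦n⟧' ≫ 𝟙 _ = (-𝟙 _) ≫ (n.negOnePow • f⟦n⟧'); simp [hn]
  · show α⟦n⟧' ≫ (-𝟙 _) = 𝟙 _ ≫ (n.negOnePow • α⟦n⟧'); simp [hn]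
  · show (-(β⟦n⟧' ≫ (shiftFunctorComm D 1 n).hom.app X)) ≫ (-𝟙 _)⟦(1:ℤ)⟧' =
      (-𝟙 _) ≫ (n.negOnePow • β⟦n⟧' ≫ (shiftFunctorComm D 1 n).hom.app X)
    simp [hn]

end MyHelpers

section Statements

variable {D : Type u} [Category.{v} D] [HasZeroObject D] [Preadditive D]
  [HasShift D ℤ] [∀ n : ℤ, (shiftFunctor D n).Additive] [Pretriangulated D]

/-- Lemma 1.10: if, in a middling good morphism of triangles `(a,b,c)`, the morphisms
`a`, `Σa`, `c`, `Σc` and `Σ⁻¹c` are all left homotopy orthogonal to `χ`, then so is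
`b`. -/
theorem homotopy_orthogonal_of_middling_good {A₀ B₀ C₀ A₁ B₁ C₁ Y₀ Y₁ : D}
    (φ₀ : A₀ ⟶ B₀) (ψ₀ : B₀ ⟶ C₀) (δ₀ : C₀ ⟶ A₀⟦(1:ℤ)⟧)
    (φ₁ : A₁ ⟶ B₁) (ψ₁ : B₁ ⟶ C₁) (δ₁ : C₁ ⟶ A₁⟦(1:ℤ)⟧)
    (hT₀ : Triangle.mk φ₀ ψ₀ δ₀ ∈ (distTriang D))
    (hT₁ : Triangle.mk φ₁ ψ₁ δ₁ ∈ (distTriang D))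
    (a : A₀ ⟶ A₁) (b : B₀ ⟶ B₁) (c : C₀ ⟶ C₁)
    (h1 : a ≫ φ₁ = φ₀ ≫ b) (h2 : b ≫ ψ₁ = ψ₀ ≫ c) (h3 : c ≫ δ₁ = δ₀ ≫ a⟦(1:ℤ)⟧')
    (hmg : MiddlingGood φ₀ ψ₀ δ₀ φ₁ ψ₁ δ₁ a b c)
    (χ : Y₀ ⟶ Y₁)
    (ha : HOrth a χ) (hShiftA : HOrth (a⟦(1:ℤ)⟧') χ)
    (hc : HOrth c χ) (hShiftC : HOrth (c⟦(1:ℤ)⟧') χ) (hShiftInvC : HOrth (c⟦(-1:ℤ)⟧') χ) :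
    HOrth b χ := by
  obtain ⟨Ca, Cb, Cc, αa, βa, αb, βb, αc, βc, fa, fb, δ, hTa, hTb, hTc, hTf,
    hco1, hco2, hco3, hco4, hco5, hco6⟩ := hmg
  intro Cb' αb' βb' hTb' Z u v hTχ
  -- `Hom(Ca, Σ⁻¹Z) = 0`, from (HO1) for `a` and (HO2) for `Σa`.
  have keyA : ∀ φ : Ca ⟶ Z⟦(-1:ℤ)⟧, φ = 0 := by
    intro φ
    have h1 := (ha Ca αa βa hTa Z u v hTχ).1 φ
    have h1' : αa ≫ φ ≫ v⟦(-1:ℤ)⟧' = 0 := by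
      rw [← cancel_mono ((shiftFunctorCompIsoId D (1:ℤ) (-1:ℤ) (by omega)).hom.app Y₀)]
      simpa using h1
    have hTa1 := my_shift_mk_dist_neg a αa βa hTa 1 (by simp)
    have h2 := (hShiftA _ _ _ hTa1 Z u v hTχ).2
    have hnat := (shiftFunctorCompIsoId D (-1:ℤ) (1:ℤ) (by omega)).hom.naturality v
    dsimp at hnat
    have h3 : αa⟦(1:ℤ)⟧' ≫ (φ⟦(1:ℤ)⟧' ≫
        (shiftFunctorCompIsoId D (-1:ℤ) (1:ℤ) (by omega)).hom.app Z) ≫ v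
        = αa⟦(1:ℤ)⟧' ≫ (0 : Ca⟦(1:ℤ)⟧ ⟶ Z) ≫ v := by
      rw [zero_comp, comp_zero, assoc, ← hnat, ← Functor.map_comp_assoc,
        ← Functor.map_comp_assoc, assoc, h1', Functor.map_zero, zero_comp]
    have h4 : φ⟦(1:ℤ)⟧' ≫
        (shiftFunctorCompIsoId D (-1:ℤ) (1:ℤ) (by omega)).hom.app Z = 0 := h2 h3
    apply (shiftFunctor D (1:ℤ)).map_injective
    rw [Functor.map_zero]
    rw [← cancel_mono ((shiftFunctorCompIsoId D (-1:ℤ) (1:ℤ) (by omega)).hom.app Z)]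
    simpa using h4
  -- `Hom(Cc, Σ⁻¹Z) = 0`, from (HO1) for `c` and (HO2) for `Σc`.
  have keyC0 : ∀ φ : Cc ⟶ Z⟦(-1:ℤ)⟧, φ = 0 := by
    intro φ
    have h1 := (hc Cc αc βc hTc Z u v hTχ).1 φ
    have h1' : αc ≫ φ ≫ v⟦(-1:ℤ)⟧' = 0 := by
      rw [← cancel_mono ((shiftFunctorCompIsoId D (1:ℤ) (-1:ℤ) (by omega)).hom.app Y₀)]
      simpa using h1
    have hTc1 := my_shift_mk_dist_neg c αc βc hTc 1 (by simp)
    have h2 := (hShiftC _ _ _ hTc1 Z u v hTχ).2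
    have hnat := (shiftFunctorCompIsoId D (-1:ℤ) (1:ℤ) (by omega)).hom.naturality v
    dsimp at hnat
    have h3 : αc⟦(1:ℤ)⟧' ≫ (φ⟦(1:ℤ)⟧' ≫
        (shiftFunctorCompIsoId D (-1:ℤ) (1:ℤ) (by omega)).hom.app Z) ≫ v
        = αc⟦(1:ℤ)⟧' ≫ (0 : Cc⟦(1:ℤ)⟧ ⟶ Z) ≫ v := by
      rw [zero_comp, comp_zero, assoc, ← hnat, ← Functor.map_comp_assoc,
        ← Functor.map_comp_assoc, assoc, h1', Functor.map_zero, zero_comp]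
    have h4 : φ⟦(1:ℤ)⟧' ≫
        (shiftFunctorCompIsoId D (-1:ℤ) (1:ℤ) (by omega)).hom.app Z = 0 := h2 h3
    apply (shiftFunctor D (1:ℤ)).map_injective
    rw [Functor.map_zero]
    rw [← cancel_mono ((shiftFunctorCompIsoId D (-1:ℤ) (1:ℤ) (by omega)).hom.app Z)]
    simpa using h4
  -- `Hom(Cc, Z) = 0`, from (HO1) for `Σ⁻¹c` and (HO2) for `c`.
  have keyC : ∀ ψ : Cc ⟶ Z, ψ = 0 := by
    intro ψ
    have hTcm := my_shift_mk_dist_neg c αc βc hTc (-1) (by simp)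
    have h1 := (hShiftInvC _ _ _ hTcm Z u v hTχ).1 (ψ⟦(-1:ℤ)⟧')
    dsimp at h1
    have h2 : αc ≫ ψ ≫ v = 0 := by
      apply (shiftFunctor D (-1:ℤ)).map_injective
      rw [Functor.map_zero]
      rw [← cancel_mono ((shiftFunctorCompIsoId D (1:ℤ) (-1:ℤ) (by omega)).hom.app Y₀)]
      simpa [Functor.map_comp] using h1
    exact (hc Cc αc βc hTc Z u v hTχ).2
      (show αc ≫ ψ ≫ v = αc ≫ (0 : Cc ⟶ Z) ≫ v by rw [h2]; simp)
  -- compare the given cone `Cb'` with the cone `Cb` from the 3×3 diagram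
  obtain ⟨g, hg₁, hg₂⟩ : ∃ g : Cb ⟶ Cb', αb ≫ g = 𝟙 B₁ ≫ αb' ∧
      βb ≫ (𝟙 B₀)⟦(1:ℤ)⟧' = g ≫ βb' := complete_distinguished_triangle_morphism
    (Triangle.mk b αb βb) (Triangle.mk b αb' βb') hTb hTb' (𝟙 _) (𝟙 _) (by exact (comp_id b).trans (id_comp b).symm)
  have hgα : αb ≫ g = αb' := by simpa using hg₁
  have hgiso : IsIso g := by
    refine isIso₃_of_isIso₁₂
      (T := Triangle.mk b αb βb) (T' := Triangle.mk b αb' βb')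
      ⟨𝟙 B₀, 𝟙 B₁, g, by exact (comp_id b).trans (id_comp b).symm, hg₁, hg₂⟩
      hTb hTb' ?_ ?_ <;> exact IsIso.id _
  constructor
  · -- (HO1) for `b`
    intro φ'
    have hfa0 : fa ≫ (g ≫ φ') = 0 := keyA _
    obtain ⟨ψ, hψ⟩ : ∃ ψ : Cc ⟶ Z⟦(-1:ℤ)⟧, g ≫ φ' = fb ≫ ψ :=
      Triangle.yoneda_exact₂ _ hTf (g ≫ φ') hfa0
    have hφ : g ≫ φ' = 0 := by
      rw [hψ]
      rw [keyC0 ψ, comp_zero]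
    have hφ' : φ' = 0 := by
      calc φ' = inv g ≫ (g ≫ φ') := by simp
        _ = 0 := by rw [hφ, comp_zero]
    rw [hφ']
    simp
  · -- (HO2) for `b`
    intro f1 f2 hf
    have hf' : αb' ≫ f1 ≫ v = αb' ≫ f2 ≫ v := hf
    have hsub : αb' ≫ (f1 - f2) ≫ v = 0 := by
      rw [Preadditive.sub_comp, Preadditive.comp_sub, hf', sub_self]
    have hψv : αb ≫ (g ≫ (f1 - f2)) ≫ v = 0 := by
      calc αb ≫ (g ≫ (f1 - f2)) ≫ v = (αb ≫ g) ≫ (f1 - f2) ≫ v := by simp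
        _ = 0 := by rw [hgα, hsub]
    have hfa0 : fa ≫ (g ≫ (f1 - f2)) = 0 := by
      apply (ha Ca αa βa hTa Z u v hTχ).2
      show αa ≫ (fa ≫ (g ≫ (f1 - f2))) ≫ v = αa ≫ (0 : Ca ⟶ Z) ≫ v
      calc αa ≫ (fa ≫ (g ≫ (f1 - f2))) ≫ v
          = (αa ≫ fa) ≫ (g ≫ (f1 - f2)) ≫ v := by simp
        _ = φ₁ ≫ αb ≫ (g ≫ (f1 - f2)) ≫ v := by rw [← hco1]; simp
        _ = 0 := by rw [hψv, comp_zero]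
        _ = αa ≫ (0 : Ca ⟶ Z) ≫ v := by simp
    obtain ⟨ξ, hξ⟩ : ∃ ξ : Cc ⟶ Z, g ≫ (f1 - f2) = fb ≫ ξ :=
      Triangle.yoneda_exact₂ _ hTf (g ≫ (f1 - f2)) hfa0
    have hψ0 : g ≫ (f1 - f2) = 0 := by
      rw [hξ]
      rw [keyC ξ, comp_zero]
    have h0 : f1 - f2 = 0 := by
      calc f1 - f2 = inv g ≫ (g ≫ (f1 - f2)) := by simp
        _ = 0 := by rw [hψ0, comp_zero]
    exact sub_eq_zero.mp h0


end Statements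
end

section
/- Let D be a triangulated category and (E, M) a triangulated pre-factorization system (i.e., E^⊥ = M and ^⊥M = E for homotopy orthogonality, and E is closed under Σ). Then E ∩ M is exactly the class of isomorphisms of D. -/
open CategoryTheory Category Limits Pretriangulated ZeroObject

universe v u w

section Statements

variable {D : Type u} [Category.{v} D] [HasZeroObject D] [Preadditive D]
  [HasShift D ℤ] [∀ n : ℤ, (shiftFunctor D n).Additive] [Pretriangulated D]

/-- For a triangulated pre-factorization system `(E, M)`, the intersection `E ∩ M` is
exactly the class of isomorphisms (Prop. 1.14(2)). -/
theorem triPFS_inter_eq_isos (E M : MorphismProperty D) (h : IsTriPFS E M)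
    {X Y : D} (f : X ⟶ Y) : (E f ∧ M f) ↔ IsIso f := by
  constructor
  · rintro ⟨hE, hM⟩
    -- f ⊥ f
    have horth : HOrth f f := by
      have : leftOrth M f := h.left_eq ▸ hE
      exact this f hM
    obtain ⟨C, α, β, hT⟩ := distinguished_cocone_triangle f
    obtain ⟨-, hinj⟩ := horth C α β hT C α β hT
    have hz : IsZero C := by
      have h1 : (fun φ : C ⟶ C => α ≫ φ ≫ β) (𝟙 C) =
          (fun φ : C ⟶ C => α ≫ φ ≫ β) 0 := by
        have h0 : α ≫ β = 0 := comp_distTriang_mor_zero₂₃ _ hT; simpa using h0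
      have hid : (𝟙 C) = (0 : C ⟶ C) := hinj h1
      exact (IsZero.iff_id_eq_zero C).2 hid
    exact (Triangle.isZero₃_iff_isIso₁ _ hT).1 hz
  · intro hf
    constructor
    · -- f ∈ E = ^⊥M : cone of f is zero
      rw [← h.left_eq]
      intro A B m _ Ce αe βe hTe Cm αm βm hTm
      have hz : IsZero Ce := Triangle.isZero₃_of_isIso₁ _ hTe hf
      constructor
      · intro φ
        have : φ = 0 := hz.eq_of_src _ _
        simp [this]
      · intro φ ψ _
        exact (hz.eq_of_src φ ψ)
    · -- f ∈ M = E^⊥ : cone of f is zero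
      rw [← h.right_eq]
      intro A B e _ Ce αe βe hTe Cm αm βm hTm
      have hz : IsZero Cm := Triangle.isZero₃_of_isIso₁ _ hTm hf
      constructor
      · intro φ
        have : βm = 0 := hz.eq_of_src _ _
        simp [this]
      · intro φ ψ _
        exact (hz.eq_of_tgt φ ψ)

end Statements
end

section
/- Let D be a triangulated category with a t-structure t and consider a homotopy cartesian square with left edge φ : X → X' and right edge ψ : Y → Y'. If τ^{≥0}φ is an isomorphism then τ^{≥0}ψ is an isomorphism; dually, if τ^{≤0}ψ is an isomorphism then τ^{≤0}φ is an isomorphism. In other words, the class E_t is closed under homotopy pushouts and M_t is closed under homotopy pullbacks. -/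
open CategoryTheory Category Limits Pretriangulated ZeroObject

universe v u w

section Statements

variable {D : Type u} [Category.{v} D] [HasZeroObject D] [Preadditive D]
  [HasShift D ℤ] [∀ n : ℤ, (shiftFunctor D n).Additive] [Pretriangulated D]

lemma bij_iff_of_equiv {α β γ δ : Type*} (p : α → β) (q : γ → δ) (e : α ≃ γ) (e' : β ≃ δ)
    (h : ∀ a, e' (p a) = q (e a)) : Function.Bijective p ↔ Function.Bijective q := by
  have hq : q = ⇑e' ∘ p ∘ ⇑e.symm := by
    funext c
    rw [Function.comp_apply, Function.comp_apply, h, e.apply_symm_apply]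
  rw [hq, Equiv.comp_bijective, Equiv.bijective_comp]

/-- Lemma 2.5: in a homotopy cartesian square, if `τ^{≥0}φ` is an isomorphism
(equivalently, `D(φ, B)` is bijective for all `B ∈ D^{≥0}`) then so is `τ^{≥0}ψ`;
dually, if `τ^{≤0}ψ` is an isomorphism then so is `τ^{≤0}φ`. -/
theorem homotopy_cartesian_truncation [HasBinaryBiproducts D] (t : TData D)
    {X X' Y Y' : D} (φ : X ⟶ X') (ψ : Y ⟶ Y') (f : X ⟶ Y) (g : X' ⟶ Y')
    (δ : Y' ⟶ X⟦(1:ℤ)⟧)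
    (hT : Triangle.mk (biprod.lift φ (-f)) (biprod.desc g ψ) δ ∈ (distTriang D)) :
    ((∀ B ∈ t.ge, Function.Bijective (fun b : X' ⟶ B => φ ≫ b)) →
      ∀ B ∈ t.ge, Function.Bijective (fun b : Y' ⟶ B => ψ ≫ b)) ∧
    (IsIso (t.tle.map ψ) → IsIso (t.tle.map φ)) := by
  have hcomm : φ ≫ g = f ≫ ψ := by
    have h0 := comp_distTriang_mor_zero₁₂ _ hT
    change biprod.lift φ (-f) ≫ biprod.desc g ψ = 0 at h0
    rw [biprod.lift_desc, Preadditive.neg_comp, add_neg_eq_zero] at h0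
    exact h0
  constructor
  · -- E_t is closed under homotopy pushout
    intro h B hB
    constructor
    · -- injectivity
      intro b₁ b₂ hb
      dsimp at hb
      have hg : g ≫ b₁ = g ≫ b₂ := (h B hB).1 (by
        show φ ≫ (g ≫ b₁) = φ ≫ (g ≫ b₂)
        rw [← assoc, hcomm, assoc, hb, ← assoc, ← hcomm, assoc])
      have hm2 : biprod.desc g ψ ≫ (b₁ - b₂) = 0 := by
        apply biprod.hom_ext' <;>
          simp [biprod.inl_desc_assoc, biprod.inr_desc_assoc, Preadditive.comp_sub, hg, hb]
      obtain ⟨s, hs⟩ := Triangle.yoneda_exact₃ _ hT (b₁ - b₂) hm2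
      -- s : X⟦1⟧ ⟶ B ; now factor s through φ⟦1⟧' using the shift adjunction
      have hBneg : (B⟦(-1:ℤ)⟧) ∈ t.ge :=
        t.shift_ge (t.ge_iso ((shiftFunctorCompIsoId D (-1) (1)
          (by omega)).app B).symm hB)
      obtain ⟨c, hc⟩ := (h _ hBneg).2
        (((shiftEquiv D (1:ℤ)).toAdjunction.homEquiv X B) s)
      dsimp at hc
      have hfact : φ⟦(1:ℤ)⟧' ≫ ((shiftEquiv D (1:ℤ)).toAdjunction.homEquiv X' B).symm c = s := by
        apply ((shiftEquiv D (1:ℤ)).toAdjunction.homEquiv X B).injective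
        erw [show (φ⟦(1:ℤ)⟧' : X⟦(1:ℤ)⟧ ⟶ X'⟦(1:ℤ)⟧) = (shiftEquiv D (1:ℤ)).functor.map φ from rfl,
          Adjunction.homEquiv_naturality_left, Equiv.apply_symm_apply]
        exact hc
      have hδφ : δ ≫ φ⟦(1:ℤ)⟧' = 0 := by
        have h31 := comp_distTriang_mor_zero₃₁ _ hT
        change δ ≫ (biprod.lift φ (-f))⟦(1:ℤ)⟧' = 0 at h31
        simpa only [assoc, ← Functor.map_comp, biprod.lift_fst, zero_comp]
          using h31 =≫ (biprod.fst : X' ⊞ Y ⟶ X')⟦(1:ℤ)⟧'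
      have : b₁ - b₂ = 0 := by
        change b₁ - b₂ = δ ≫ s at hs
        erw [hs, ← hfact, ← assoc, hδφ, zero_comp]
      exact sub_eq_zero.mp this
    · -- surjectivity
      intro c
      obtain ⟨b, hb⟩ := (h B hB).2 (f ≫ c)
      dsimp at hb
      have hk : biprod.lift φ (-f) ≫ biprod.desc b c = 0 := by
        rw [biprod.lift_desc, Preadditive.neg_comp, hb, add_neg_cancel]
      obtain ⟨b', hb'⟩ := Triangle.yoneda_exact₂ _ hT (biprod.desc b c) hk
      refine ⟨b', ?_⟩
      change biprod.desc b c = biprod.desc g ψ ≫ b' at hb'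
      have := biprod.inr ≫= hb'
      simp only [biprod.inr_desc, biprod.inr_desc_assoc] at this
      exact (biprod.inr_desc_assoc g ψ b').symm.trans this.symm
  · -- M_t is closed under homotopy pullback
    intro hiso
    -- translate `IsIso (tle.map χ)` into bijectivity of hom-sets from objects of `le`
    have hswap : ∀ {W W' : D} (χ : W ⟶ W') (A : D), A ∈ t.le →
        (Function.Bijective (fun g : A ⟶ t.tle.obj W => g ≫ t.tle.map χ) ↔
          Function.Bijective (fun a : A ⟶ W => a ≫ χ)) := by
      intro W W' χ A hA
      refine bij_iff_of_equiv _ _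
        (Equiv.ofBijective _ (t.tle_univ hA W)) (Equiv.ofBijective _ (t.tle_univ hA W'))
        (fun gg => ?_)
      show (gg ≫ t.tle.map χ) ≫ t.σ.app W' = (gg ≫ t.σ.app W) ≫ χ
      rw [assoc, assoc, NatTrans.naturality]
      rfl
    have H : ∀ A ∈ t.le, Function.Bijective (fun a : A ⟶ Y => a ≫ ψ) := by
      intro A hA
      rw [← hswap ψ A hA]
      exact ⟨fun g₁ g₂ hh => by
          simpa using (show g₁ ≫ t.tle.map ψ = g₂ ≫ t.tle.map ψ from hh) =≫ inv (t.tle.map ψ),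
        fun gg => ⟨gg ≫ inv (t.tle.map ψ), by simp⟩⟩
    have key : ∀ A ∈ t.le, Function.Bijective (fun a : A ⟶ X => a ≫ φ) := by
      intro A hA
      constructor
      · intro a₁ a₂ ha
        dsimp at ha
        have hf : a₁ ≫ f = a₂ ≫ f := (H A hA).1 (by
          show (a₁ ≫ f) ≫ ψ = (a₂ ≫ f) ≫ ψ
          rw [assoc, assoc, ← hcomm, ← assoc, ha, assoc])
        have h1 : (a₁ - a₂) ≫ biprod.lift φ (-f) = 0 := by
          apply biprod.hom_ext <;> simp [Preadditive.sub_comp, ha, hf]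
        obtain ⟨s, hs⟩ := Triangle.coyoneda_exact₂ _ (inv_rot_of_distTriang _ hT) (a₁ - a₂) h1
        -- s : A ⟶ Y'⟦-1⟧ ; factor it through ψ⟦-1⟧' using the shift adjunction
        obtain ⟨chat, hchat⟩ := (H _ (t.shift_le hA)).2
          (((shiftEquiv D (1:ℤ)).toAdjunction.homEquiv A Y').symm s)
        dsimp at hchat
        have hs' : s = ((shiftEquiv D (1:ℤ)).toAdjunction.homEquiv A Y) chat ≫ ψ⟦(-1:ℤ)⟧' := by
          erw [show (ψ⟦(-1:ℤ)⟧' : Y⟦(-1:ℤ)⟧ ⟶ Y'⟦(-1:ℤ)⟧) =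
            (shiftEquiv D (1:ℤ)).inverse.map ψ from rfl,
            ← Adjunction.homEquiv_naturality_right, hchat]
          exact (Equiv.apply_symm_apply _ s).symm
        have hψδ : ψ ≫ δ = 0 := by
          have h23 := comp_distTriang_mor_zero₂₃ _ hT
          change biprod.desc g ψ ≫ δ = 0 at h23
          rw [← biprod.inr_desc g ψ, assoc, h23, comp_zero]
        have hzero : ψ⟦(-1:ℤ)⟧' ≫
            (Triangle.mk (biprod.lift φ (-f)) (biprod.desc g ψ) δ).invRotate.mor₁ = 0 := by
          have e : (Triangle.mk (biprod.lift φ (-f)) (biprod.desc g ψ) δ).invRotate.mor₁ =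
            -(δ⟦(-1:ℤ)⟧') ≫ (shiftFunctorCompIsoId D (1:ℤ) (-1) (add_neg_cancel 1)).hom.app X := rfl
          rw [e]
          exact (by rw [Preadditive.comp_neg, ← assoc, ← Functor.map_comp, hψδ,
              Functor.map_zero, zero_comp, neg_zero] : ψ⟦(-1:ℤ)⟧' ≫ (-(δ⟦(-1:ℤ)⟧') ≫
                (shiftFunctorCompIsoId D (1:ℤ) (-1) (add_neg_cancel 1)).hom.app X) = 0)
        have : a₁ - a₂ = 0 := by
          erw [hs, hs', assoc, hzero]
          exact comp_zero
        exact sub_eq_zero.mp this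
      · intro b
        obtain ⟨c, hc⟩ := (H A hA).2 (b ≫ g)
        dsimp at hc
        have hk : biprod.lift b (-c) ≫ biprod.desc g ψ = 0 := by
          rw [biprod.lift_desc, Preadditive.neg_comp, hc, add_neg_cancel]
        obtain ⟨a, ha⟩ := Triangle.coyoneda_exact₂ _ hT (biprod.lift b (-c)) hk
        refine ⟨a, ?_⟩
        change biprod.lift b (-c) = a ≫ biprod.lift φ (-f) at ha
        have := ha =≫ (biprod.fst : X' ⊞ Y ⟶ X')
        simp only [biprod.lift_fst, assoc] at this
        exact (congrArg (a ≫ ·) (biprod.lift_fst φ (-f))).symm.trans this.symm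
    have bijmap : ∀ A ∈ t.le,
        Function.Bijective (fun gg : A ⟶ t.tle.obj X => gg ≫ t.tle.map φ) := by
      intro A hA
      rw [hswap φ A hA]
      exact key A hA
    obtain ⟨r, hr⟩ := (bijmap (t.tle.obj X') (t.tle_mem X')).2 (𝟙 _)
    dsimp at hr
    have hr2 : t.tle.map φ ≫ r = 𝟙 _ := (bijmap (t.tle.obj X) (t.tle_mem X)).1 (by
      show (t.tle.map φ ≫ r) ≫ t.tle.map φ = 𝟙 _ ≫ t.tle.map φ
      rw [assoc, hr, comp_id, id_comp])
    exact ⟨r, hr2, hr⟩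

end Statements
end

section
/- Let D be a triangulated category with a t-structure t = (D^{≤0}, D^{≥0}). Every morphism φ : X → Y in D factors as φ = φ_m ∘ φ_e where τ^{≥1}(φ_e) is an isomorphism and τ^{≤0}(φ_m) is an isomorphism (i.e., φ_e ∈ E_t and φ_m ∈ M_t). -/
open CategoryTheory Category Limits Pretriangulated ZeroObject

universe v u w

section Statements

variable {D : Type u} [Category.{v} D] [HasZeroObject D] [Preadditive D]
  [HasShift D ℤ] [∀ n : ℤ, (shiftFunctor D n).Additive] [Pretriangulated D]


section Aux

variable {D : Type u} [Category.{v} D] [HasZeroObject D] [Preadditive D]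
  [HasShift D ℤ] [∀ n : ℤ, (shiftFunctor D n).Additive] [Pretriangulated D]

/-- A morphism whose precomposition induces a bijection on homs into every
object of `D^{≥1}` is inverted by `τ^{≥1}`. -/
lemma tge_iso_of_bij (t : TData D) {Z W : D} (f : Z ⟶ W)
    (h : ∀ (B : D), B⟦(1:ℤ)⟧ ∈ t.ge → Function.Bijective (fun g : W ⟶ B => f ≫ g)) :
    IsIso (t.tge.map f) := by
  have key : ∀ (B : D), B⟦(1:ℤ)⟧ ∈ t.ge →
      Function.Bijective (fun g : t.tge.obj W ⟶ B => t.tge.map f ≫ g) := by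
    intro B hB
    have h1 := t.tge_univ W hB
    have h2 := t.tge_univ Z hB
    have hcomp : ((fun g : t.tge.obj Z ⟶ B => t.ρ.app Z ≫ g) ∘
        (fun g : t.tge.obj W ⟶ B => t.tge.map f ≫ g))
        = (fun g : W ⟶ B => f ≫ g) ∘ (fun g : t.tge.obj W ⟶ B => t.ρ.app W ≫ g) := by
      funext g
      have := t.ρ.naturality f
      dsimp at this ⊢
      rw [← Category.assoc, ← this, Category.assoc]
    have hbij : Function.Bijective ((fun g : t.tge.obj Z ⟶ B => t.ρ.app Z ≫ g) ∘
        (fun g : t.tge.obj W ⟶ B => t.tge.map f ≫ g)) := by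
      rw [hcomp]
      exact (h B hB).comp h1
    exact (Function.Bijective.of_comp_iff' h2 _).mp hbij
  obtain ⟨s, hs⟩ := (key (t.tge.obj Z) (t.tge_mem Z)).2 (𝟙 _)
  have hs' : s ≫ t.tge.map f = 𝟙 _ := by
    apply (key (t.tge.obj W) (t.tge_mem W)).1
    dsimp at hs ⊢
    rw [← Category.assoc, hs, Category.id_comp, Category.comp_id]
  exact ⟨s, hs, hs'⟩

/-- A morphism whose postcomposition induces a bijection on homs from every
object of `D^{≤0}` is inverted by `τ^{≤0}`. -/
lemma tle_iso_of_bij (t : TData D) {Z W : D} (f : Z ⟶ W)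
    (h : ∀ (A : D), A ∈ t.le → Function.Bijective (fun g : A ⟶ Z => g ≫ f)) :
    IsIso (t.tle.map f) := by
  have key : ∀ (A : D), A ∈ t.le →
      Function.Bijective (fun g : A ⟶ t.tle.obj Z => g ≫ t.tle.map f) := by
    intro A hA
    have h1 := t.tle_univ hA Z
    have h2 := t.tle_univ hA W
    have hcomp : ((fun g : A ⟶ t.tle.obj W => g ≫ t.σ.app W) ∘
        (fun g : A ⟶ t.tle.obj Z => g ≫ t.tle.map f))
        = (fun g : A ⟶ Z => g ≫ f) ∘ (fun g : A ⟶ t.tle.obj Z => g ≫ t.σ.app Z) := by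
      funext g
      have := t.σ.naturality f
      dsimp at this ⊢
      rw [Category.assoc, this, ← Category.assoc]
    have hbij : Function.Bijective ((fun g : A ⟶ t.tle.obj W => g ≫ t.σ.app W) ∘
        (fun g : A ⟶ t.tle.obj Z => g ≫ t.tle.map f)) := by
      rw [hcomp]
      exact (h A hA).comp h1
    exact (Function.Bijective.of_comp_iff' h2 _).mp hbij
  obtain ⟨s, hs⟩ := (key (t.tle.obj W) (t.tle_mem W)).2 (𝟙 _)
  have hs' : t.tle.map f ≫ s = 𝟙 _ := by
    apply (key (t.tle.obj Z) (t.tle_mem Z)).1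
    dsimp at hs ⊢
    rw [Category.assoc, hs, Category.id_comp, Category.comp_id]
  exact ⟨s, hs', hs⟩

end Aux

/-- Lemma 2.6: every morphism is `F_t`-crumbled, i.e. factors as a morphism inverted
by `τ^{≥1}` followed by a morphism inverted by `τ^{≤0}`. -/
theorem exists_Et_Mt_factorization (t : TData D) {X Y : D} (φ : X ⟶ Y) :
    ∃ (P : D) (e : X ⟶ P) (m : P ⟶ Y),
      IsIso (t.tge.map e) ∧ IsIso (t.tle.map m) ∧ e ≫ m = φ := by
  classical
  -- the homotopy pushout of `X ⟵ τ^{≤0}X ⟶ τ^{≤0}Y`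
  obtain ⟨P, q, δ, hT⟩ := Pretriangulated.distinguished_cocone_triangle
    (biprod.lift (t.σ.app X) (-(t.tle.map φ)) : t.tle.obj X ⟶ X ⊞ t.tle.obj Y)
  set w : t.tle.obj X ⟶ X ⊞ t.tle.obj Y := biprod.lift (t.σ.app X) (-(t.tle.map φ)) with hw
  set v : X ⊞ t.tle.obj Y ⟶ Y := biprod.desc φ (t.σ.app Y) with hv
  have hσnat : t.σ.app X ≫ φ = t.tle.map φ ≫ t.σ.app Y := by
    have := t.σ.naturality φ; dsimp at this; rw [this]
  have hwv : w ≫ v = 0 := by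
    rw [hw, hv, biprod.lift_desc, hσnat]
    simp
  obtain ⟨m, hm⟩ : ∃ m : P ⟶ Y, v = q ≫ m := Pretriangulated.Triangle.yoneda_exact₂ _ hT v hwv
  -- the truncation triangle of `X`, used to control the connecting map `δ`
  obtain ⟨A', B', i, p, δ', hA', hB', hTx⟩ := t.tri X
  have hσp : t.σ.app X ≫ p = 0 := t.hom_zero _ (t.tle_mem X) hB'
  obtain ⟨β, hβ⟩ : ∃ β : t.tle.obj X ⟶ A', t.σ.app X = β ≫ i :=
    Pretriangulated.Triangle.coyoneda_exact₂ _ hTx (t.σ.app X) hσp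
  obtain ⟨α, hα⟩ := (t.tle_univ hA' X).2 i
  dsimp at hα
  have hβα : β ≫ α = 𝟙 _ := (t.tle_univ (t.tle_mem X) X).1
    (show (β ≫ α) ≫ t.σ.app X = (𝟙 _) ≫ t.σ.app X by
      rw [Category.assoc, hα, ← hβ, Category.id_comp])
  obtain ⟨g, hg₁, hg₂⟩ : ∃ g : P ⟶ B', q ≫ g = biprod.fst ≫ p ∧ δ ≫ β⟦(1:ℤ)⟧' = g ≫ δ' :=
    Pretriangulated.complete_distinguished_triangle_morphism
    (Triangle.mk w q δ) (Triangle.mk i p δ') hT hTx β biprod.fst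
    (by change w ≫ biprod.fst = β ≫ i; rw [hw, biprod.lift_fst, hβ])
  refine ⟨P, biprod.inl ≫ q, m, ?_, ?_, ?_⟩
  · -- `e = inl ≫ q` is inverted by `τ^{≥1}`
    apply tge_iso_of_bij
    intro B hB
    constructor
    · intro h₁ h₂ hh
      dsimp at hh
      have hq : q ≫ (h₁ - h₂) = 0 := by
        apply biprod.hom_ext'
        · rw [comp_zero, ← Category.assoc, Preadditive.comp_sub, hh, sub_self]
        · rw [comp_zero, ← Category.assoc]
          exact t.hom_zero _ (t.tle_mem Y) hB
      obtain ⟨c, hc⟩ := Pretriangulated.Triangle.yoneda_exact₃ _ hT (h₁ - h₂) hq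
      have hc0 : c = 0 := t.hom_zero _ (t.shift_le (t.tle_mem X)) hB
      rw [hc0, comp_zero] at hc
      exact sub_eq_zero.mp hc
    · intro f
      have h0 : w ≫ biprod.desc f 0 = 0 := by
        rw [hw, biprod.lift_desc, comp_zero, add_zero]
        exact t.hom_zero _ (t.tle_mem X) hB
      obtain ⟨fP, hfP⟩ : ∃ fP : P ⟶ B, biprod.desc f 0 = q ≫ fP :=
        Pretriangulated.Triangle.yoneda_exact₂ _ hT (biprod.desc f 0) h0
      refine ⟨fP, ?_⟩
      dsimp
      rw [Category.assoc, ← hfP, biprod.inl_desc]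
  · -- `m` is inverted by `τ^{≤0}`
    apply tle_iso_of_bij
    intro A hA
    constructor
    · intro h₁ h₂ hh
      dsimp at hh
      have hhm : (h₁ - h₂) ≫ m = 0 := by rw [Preadditive.sub_comp, hh, sub_self]
      set h : A ⟶ P := h₁ - h₂ with hhdef
      -- `h ≫ δ = 0` since `δ` factors through an object of `D^{≥1}`
      have hδ0 : h ≫ δ = 0 := by
        have hg0 : h ≫ g = 0 := t.hom_zero _ hA hB'
        calc h ≫ δ = h ≫ δ ≫ (β ≫ α)⟦(1:ℤ)⟧' := by
              rw [hβα]; simp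
          _ = (h ≫ g) ≫ δ' ≫ α⟦(1:ℤ)⟧' := by
              rw [Functor.map_comp, reassoc_of% hg₂]
              simp only [Category.assoc]
          _ = 0 := by rw [hg0, zero_comp]
      obtain ⟨r, hr⟩ : ∃ r : A ⟶ X ⊞ t.tle.obj Y, h = r ≫ q :=
        Pretriangulated.Triangle.coyoneda_exact₃ _ hT h hδ0
      obtain ⟨a, ha⟩ := (t.tle_univ hA X).2 (r ≫ biprod.fst)
      dsimp at ha
      have hrv : r ≫ v = 0 := by
        have h4 : (r ≫ q) ≫ m = 0 := by rw [← hr]; exact hhm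
        rw [hm, ← Category.assoc]
        exact h4
      have h5 : r ≫ v = (a ≫ t.tle.map φ + r ≫ biprod.snd) ≫ t.σ.app Y := by
        rw [Preadditive.add_comp, Category.assoc a, ← hσnat, ← Category.assoc, ha, hv,
          biprod.desc_eq, Preadditive.comp_add, ← Category.assoc, ← Category.assoc]
      have h3 : a ≫ t.tle.map φ + r ≫ biprod.snd = 0 := by
        apply (t.tle_univ hA Y).1
        show (a ≫ t.tle.map φ + r ≫ biprod.snd) ≫ t.σ.app Y = (0 : A ⟶ t.tle.obj Y) ≫ t.σ.app Y
        rw [zero_comp, ← h5, hrv]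
      have hreq : r = a ≫ w := by
        apply biprod.hom_ext
        · rw [Category.assoc, hw, biprod.lift_fst, ha]
        · rw [Category.assoc, hw, biprod.lift_snd, Preadditive.comp_neg]
          rw [eq_neg_iff_add_eq_zero, add_comm]
          exact h3
      have hw0 : w ≫ q = 0 := Pretriangulated.comp_distTriang_mor_zero₁₂ _ hT
      have : h = 0 := by rw [hr, hreq, Category.assoc, hw0, comp_zero]
      exact sub_eq_zero.mp (hhdef ▸ this)
    · intro f
      obtain ⟨a, ha⟩ := (t.tle_univ hA Y).2 f
      dsimp at ha
      refine ⟨a ≫ biprod.inr ≫ q, ?_⟩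
      dsimp
      rw [Category.assoc, Category.assoc, ← hm, hv, biprod.inr_desc, ha]
  · rw [Category.assoc, ← hm, hv, biprod.inl_desc]


end Statements
end

section
/- Let D be a triangulated category with a t-structure t. For every e ∈ E_t and m ∈ M_t one has e ⊥ m in the sense of homotopy orthogonality: with cones C_e and C_m of chosen triangles on e and m, the map D(C_e, Σ⁻¹C_m) → D(E₁, M₀) is zero and the map D(C_e, C_m) → D(E₁, ΣM₀) is injective. -/
open CategoryTheory Category Limits Pretriangulated ZeroObject

universe v u w

section Lemmas

variable {D : Type u} [Category.{v} D] [HasZeroObject D] [Preadditive D]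
  [HasShift D ℤ] [∀ n : ℤ, (shiftFunctor D n).Additive] [Pretriangulated D]

/-- If all maps `X⟦1⟧ ⟶ Y` vanish, then all maps `X ⟶ Y⟦-1⟧` vanish. -/
lemma TData.shift_neg_vanish {X Y : D} (h : ∀ g : X⟦(1:ℤ)⟧ ⟶ Y, g = 0)
    (f : X ⟶ Y⟦(-1:ℤ)⟧) : f = 0 := by
  have h1 : f⟦(1:ℤ)⟧' ≫ (shiftEquiv D (1:ℤ)).counitIso.hom.app Y = 0 := h _
  have h2 : f⟦(1:ℤ)⟧' = 0 := by
    erw [← cancel_mono ((shiftEquiv D (1:ℤ)).counitIso.hom.app Y), h1, zero_comp]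
  apply (shiftFunctor D (1:ℤ)).map_injective
  rw [h2, Functor.map_zero]

/-- For `Y ∈ le`, composition with `m ∈ M_t` is a bijection `(Y ⟶ A) ≃ (Y ⟶ B)`. -/
lemma TData.bij_comp_le (t : TData D) {Y A B : D} (hY : Y ∈ t.le)
    (m : A ⟶ B) (hm : IsIso (t.tle.map m)) :
    Function.Bijective (fun g : Y ⟶ A => g ≫ m) := by
  have nat : t.tle.map m ≫ t.σ.app B = t.σ.app A ≫ m := by
    simpa using t.σ.naturality m
  constructor
  · intro g₁ g₂ h
    dsimp at h
    obtain ⟨g₁', rfl⟩ := (t.tle_univ hY A).2 g₁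
    obtain ⟨g₂', rfl⟩ := (t.tle_univ hY A).2 g₂
    dsimp at h
    have h' : (g₁' ≫ t.tle.map m) ≫ t.σ.app B = (g₂' ≫ t.tle.map m) ≫ t.σ.app B := by
      simpa only [assoc, nat] using h
    have := (t.tle_univ hY B).1 h'
    have h'' : g₁' = g₂' := by
      rwa [cancel_mono (t.tle.map m)] at this
    rw [h'']
  · intro h
    obtain ⟨h', rfl⟩ := (t.tle_univ hY B).2 h
    refine ⟨h' ≫ inv (t.tle.map m) ≫ t.σ.app A, ?_⟩
    dsimp
    rw [assoc, assoc, ← nat, IsIso.inv_hom_id_assoc]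

/-- For `Z ∈ D^{≥1}`, composition with `e ∈ E_t` is a bijection `(B ⟶ Z) ≃ (A ⟶ Z)`. -/
lemma TData.bij_comp_ge (t : TData D) {Z A B : D} (hZ : Z⟦(1:ℤ)⟧ ∈ t.ge)
    (e : A ⟶ B) (he : IsIso (t.tge.map e)) :
    Function.Bijective (fun g : B ⟶ Z => e ≫ g) := by
  have nat : e ≫ t.ρ.app B = t.ρ.app A ≫ t.tge.map e := by
    simpa using t.ρ.naturality e
  constructor
  · intro g₁ g₂ h
    dsimp at h
    obtain ⟨g₁', rfl⟩ := (t.tge_univ B hZ).2 g₁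
    obtain ⟨g₂', rfl⟩ := (t.tge_univ B hZ).2 g₂
    dsimp at h
    conv at h => rw [← assoc, nat, assoc]
    conv at h => rhs; rw [← assoc, nat, assoc]
    have := (t.tge_univ A hZ).1 h
    have h'' : g₁' = g₂' := by
      rwa [cancel_epi (t.tge.map e)] at this
    rw [h'']
  · intro h
    obtain ⟨h', rfl⟩ := (t.tge_univ A hZ).2 h
    refine ⟨t.ρ.app B ≫ inv (t.tge.map e) ≫ h', ?_⟩
    dsimp
    rw [← assoc, nat, assoc, IsIso.hom_inv_id_assoc]

/-- If `γ ≫ e = 0` with `e ∈ E_t`, then `γ` kills every map into `D^{≥1}`. -/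
lemma TData.comp_ge_vanish (t : TData D) {W A B Z : D} (e : A ⟶ B)
    (he : IsIso (t.tge.map e)) (γ : W ⟶ A) (hγ : γ ≫ e = 0)
    (z : A ⟶ Z) (hZ : Z⟦(1:ℤ)⟧ ∈ t.ge) : γ ≫ z = 0 := by
  obtain ⟨z', hz'⟩ := (t.tge_univ A hZ).2 z
  dsimp at hz'
  have natγ : γ ≫ t.ρ.app A = t.ρ.app W ≫ t.tge.map γ := by
    simpa using t.ρ.naturality γ
  have nate : e ≫ t.ρ.app B = t.ρ.app A ≫ t.tge.map e := by
    simpa using t.ρ.naturality e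
  have h1 : t.ρ.app W ≫ (t.tge.map γ ≫ t.tge.map e) = t.ρ.app W ≫ 0 := by
    rw [comp_zero, ← assoc, ← natγ, assoc, ← nate, ← assoc, hγ]
    exact zero_comp
  have h2 : t.tge.map γ ≫ t.tge.map e = 0 := (t.tge_univ W (t.tge_mem B)).1 h1
  have h3 : t.tge.map γ = 0 := by
    rw [← cancel_mono (t.tge.map e), zero_comp]
    exact h2
  rw [← hz', ← assoc, natγ, h3]
  simp

/-- If `m ≫ χ = 0` with `m ∈ M_t`, then any map from `Y ∈ le` composed with `χ` vanishes. -/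
lemma TData.le_comp_vanish (t : TData D) {W A B Y : D} (m : A ⟶ B)
    (hm : IsIso (t.tle.map m)) (χ : B ⟶ W) (hχ : m ≫ χ = 0)
    (y : Y ⟶ B) (hY : Y ∈ t.le) : y ≫ χ = 0 := by
  obtain ⟨y', hy'⟩ := (t.tle_univ hY B).2 y
  dsimp at hy'
  have natχ : t.tle.map χ ≫ t.σ.app W = t.σ.app B ≫ χ := by
    simpa using t.σ.naturality χ
  have natm : t.tle.map m ≫ t.σ.app B = t.σ.app A ≫ m := by
    simpa using t.σ.naturality m
  have h1 : (t.tle.map m ≫ t.tle.map χ) ≫ t.σ.app W = 0 ≫ t.σ.app W := by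
    rw [zero_comp, assoc, natχ, ← assoc, natm, assoc, hχ, comp_zero]
  have h2 : t.tle.map m ≫ t.tle.map χ = 0 := (t.tle_univ (t.tle_mem A) W).1 h1
  have h3 : t.tle.map χ = 0 := by
    rw [← cancel_epi (t.tle.map m), comp_zero]
    exact h2
  rw [← hy', assoc, ← natχ, h3, zero_comp, comp_zero]

/-- V1: every map from the cone of `e ∈ E_t` to an object of `D^{≥1}` vanishes. -/
lemma TData.cone_e_hom_vanish (t : TData D) {E₀ E₁ Ce : D}
    (e : E₀ ⟶ E₁) (αe : E₁ ⟶ Ce) (βe : Ce ⟶ E₀⟦(1:ℤ)⟧)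
    (hTe : Triangle.mk e αe βe ∈ distTriang D) (he : IsIso (t.tge.map e))
    {Z : D} (hZ : Z⟦(1:ℤ)⟧ ∈ t.ge) (f : Ce ⟶ Z) : f = 0 := by
  -- αe ≫ f = 0
  have h1 : e ≫ (αe ≫ f) = e ≫ 0 := by
    rw [comp_zero, ← assoc]
    have := comp_distTriang_mor_zero₁₂ _ hTe
    skip
    erw [this, zero_comp]
  have h2 : αe ≫ f = 0 := (t.bij_comp_ge hZ e he).1 h1
  obtain ⟨h, hh⟩ := Triangle.yoneda_exact₃ _ hTe f h2
  skip
  -- kill βe ≫ h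
  have hZ' : (Z⟦(-1:ℤ)⟧)⟦(1:ℤ)⟧ ∈ t.ge :=
    t.ge_iso ((shiftEquiv D (1:ℤ)).counitIso.app Z).symm (t.shift_ge hZ)
  set h₀ : E₀ ⟶ Z⟦(-1:ℤ)⟧ := (shiftEquiv D (1:ℤ)).unitIso.hom.app E₀ ≫ h⟦(-1:ℤ)⟧' with hh₀
  obtain ⟨k, hk⟩ := (t.bij_comp_ge hZ' e he).2 h₀
  dsimp at hk
  -- γ' ≫ e = 0 where γ' = βe⟦-1⟧' ≫ unit.inv
  have hγ : (βe⟦(-1:ℤ)⟧' ≫ (shiftEquiv D (1:ℤ)).unitIso.inv.app E₀) ≫ e = 0 := by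
    have h' : (-(βe⟦(-1:ℤ)⟧' ≫ (shiftEquiv D (1:ℤ)).unitIso.inv.app E₀)) ≫ e = 0 :=
      comp_distTriang_mor_zero₁₂ _ (inv_rot_of_distTriang _ hTe)
    simpa using h'
  have key : βe⟦(-1:ℤ)⟧' ≫ h⟦(-1:ℤ)⟧' = 0 := by
    have e1 : (βe⟦(-1:ℤ)⟧' ≫ (shiftEquiv D (1:ℤ)).unitIso.inv.app E₀) ≫ h₀ = 0 := by
      rw [← hk, ← assoc, hγ, zero_comp]
    rw [hh₀] at e1
    erw [assoc, Iso.inv_hom_id_app_assoc] at e1; exact e1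
  have : (βe ≫ h)⟦(-1:ℤ)⟧' = 0 := by erw [Functor.map_comp, key]
  have hβh : βe ≫ h = 0 := by
    apply (shiftFunctor D (-1:ℤ)).map_injective
    rw [this, Functor.map_zero]
  erw [hh, hβh]


open Preadditive in
/-- V2: every map from `Y ∈ le` to the shifted cone `Cm⟦-1⟧` of `m ∈ M_t` vanishes. -/
lemma TData.shift_cone_m_hom_vanish (t : TData D) {M₀ M₁ Cm : D}
    (m : M₀ ⟶ M₁) (αm : M₁ ⟶ Cm) (βm : Cm ⟶ M₀⟦(1:ℤ)⟧)
    (hTm : Triangle.mk m αm βm ∈ distTriang D) (hm : IsIso (t.tle.map m))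
    {Y : D} (hY : Y ∈ t.le) (f : Y ⟶ Cm⟦(-1:ℤ)⟧) : f = 0 := by
  have hT' := inv_rot_of_distTriang _ hTm
  have hT'' := inv_rot_of_distTriang _ hT'
  set T' := (Triangle.mk m αm βm).invRotate with hT'def
  set T'' := T'.invRotate with hT''def
  have h0 : T'.mor₁ ≫ m = 0 := comp_distTriang_mor_zero₁₂ _ hT'
  have h1 : (f ≫ T'.mor₁) ≫ m = 0 ≫ m := by
    erw [assoc, h0, comp_zero, zero_comp]
  have h2 : f ≫ T'.mor₁ = 0 := (t.bij_comp_le hY m hm).1 h1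
  obtain ⟨u, hu⟩ := Triangle.coyoneda_exact₂ T'' hT'' (X := Y) f h2
  -- u : Y ⟶ M₁⟦-1⟧
  have huαm : u ≫ αm⟦(-1:ℤ)⟧' = 0 := by
    have hy : ((u ≫ αm⟦(-1:ℤ)⟧')⟦(1:ℤ)⟧' ≫
        (shiftEquiv D (1:ℤ)).counitIso.hom.app Cm) = (u⟦(1:ℤ)⟧' ≫
        (shiftEquiv D (1:ℤ)).counitIso.hom.app M₁) ≫ αm := by
      have hnat : (shiftFunctor D (1:ℤ)).map ((shiftFunctor D (-1:ℤ)).map αm) ≫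
          (shiftEquiv D (1:ℤ)).counitIso.hom.app Cm =
          (shiftEquiv D (1:ℤ)).counitIso.hom.app M₁ ≫ αm := by
        have h := (shiftEquiv D (1:ℤ)).counitIso.hom.naturality αm
        exact h
      erw [Functor.map_comp, assoc, hnat, ← assoc]
    have hv : (u⟦(1:ℤ)⟧' ≫ (shiftEquiv D (1:ℤ)).counitIso.hom.app M₁) ≫ αm = 0 :=
      t.le_comp_vanish m hm αm (comp_distTriang_mor_zero₁₂ _ hTm) _ (t.shift_le hY)
    have : (u ≫ αm⟦(-1:ℤ)⟧')⟦(1:ℤ)⟧' = 0 := by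
      erw [← cancel_mono ((shiftEquiv D (1:ℤ)).counitIso.hom.app Cm), hy, hv, zero_comp]
    apply (shiftFunctor D (1:ℤ)).map_injective
    rw [this, Functor.map_zero]
  have hfin : u ≫ T''.mor₁ = 0 := by
    have hx : u ≫ ((αm ≫ (shiftEquiv D (1:ℤ)).counitIso.inv.app Cm)⟦(-1:ℤ)⟧' ≫
        (shiftEquiv D (1:ℤ)).unitIso.inv.app (Cm⟦(-1:ℤ)⟧)) = 0 := by
      erw [Functor.map_comp, ← assoc, ← assoc, ← assoc, ← assoc, huαm]; erw [zero_comp, zero_comp, zero_comp, zero_comp]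
    have hmor : T''.mor₁ = -((αm ≫ (shiftEquiv D (1:ℤ)).counitIso.inv.app Cm)⟦(-1:ℤ)⟧' ≫
        (shiftEquiv D (1:ℤ)).unitIso.inv.app (Cm⟦(-1:ℤ)⟧)) := rfl
    erw [hmor, comp_neg, hx, neg_zero]
  erw [hu, hfin]; rfl

open Preadditive in
/-- L8: the cone of `m ∈ M_t` lies in `D^{≥0}`, i.e. `Cm⟦-1⟧ ∈ D^{≥1}`. -/
lemma TData.shift_cone_m_mem_ge (t : TData D) {M₀ M₁ Cm : D}
    (m : M₀ ⟶ M₁) (αm : M₁ ⟶ Cm) (βm : Cm ⟶ M₀⟦(1:ℤ)⟧)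
    (hTm : Triangle.mk m αm βm ∈ distTriang D) (hm : IsIso (t.tle.map m)) :
    (Cm⟦(-1:ℤ)⟧)⟦(1:ℤ)⟧ ∈ t.ge := by
  obtain ⟨A, B, i, p, δ, hA, hB, hT⟩ := t.tri (Cm⟦(-1:ℤ)⟧)
  have hi : i = 0 := t.shift_cone_m_hom_vanish m αm βm hTm hm hA i
  -- 𝟙 A = 0
  have h1 : (𝟙 A) ≫ (Triangle.mk i p δ).invRotate.mor₂ = 0 := by
    show (𝟙 A) ≫ i = 0
    rw [hi, comp_zero]
  obtain ⟨u, hu⟩ := Triangle.coyoneda_exact₂ _ (inv_rot_of_distTriang _ hT) (𝟙 A) h1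
  have hu0 : u = 0 := TData.shift_neg_vanish (fun g => t.hom_zero g (t.shift_le hA) hB) u
  have hA0 : (𝟙 A) = 0 := by erw [hu, hu0, zero_comp]; rfl
  -- δ = 0
  have hδ : δ = 0 := by
    have : δ ≫ (𝟙 (A⟦(1:ℤ)⟧)) = δ ≫ 0 := by
      rw [← (shiftFunctor D (1:ℤ)).map_id, hA0, Functor.map_zero]
    simpa using this
  -- 𝟙 B = q ≫ p
  have h2 : (𝟙 B) ≫ (Triangle.mk i p δ).rotate.mor₂ = 0 := by
    show (𝟙 B) ≫ δ = 0
    rw [hδ, comp_zero]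
  obtain ⟨q, hq⟩ := Triangle.coyoneda_exact₂ _ (rot_of_distTriang _ hT) (𝟙 B) h2
  have hqex : ∃ q' : B ⟶ Cm⟦(-1:ℤ)⟧, 𝟙 B = q' ≫ p := ⟨q, hq⟩
  obtain ⟨q', hq'⟩ := hqex
  have h3 : (𝟙 (Cm⟦(-1:ℤ)⟧) - p ≫ q') ≫ p = 0 := by
    rw [sub_comp, id_comp, assoc, ← hq', comp_id, sub_self]
  obtain ⟨v, hv⟩ := Triangle.coyoneda_exact₂ _ hT _ h3
  have hv' : 𝟙 (Cm⟦(-1:ℤ)⟧) - p ≫ q' = v ≫ i := hv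
  have h4 : 𝟙 (Cm⟦(-1:ℤ)⟧) - p ≫ q' = 0 := by erw [hv', hi, comp_zero]
  have hpq : p ≫ q' = 𝟙 (Cm⟦(-1:ℤ)⟧) := (sub_eq_zero.mp h4).symm
  have : IsIso p := ⟨q', hpq, hq'.symm⟩
  exact t.ge_iso ((shiftFunctor D (1:ℤ)).mapIso (asIso p)).symm hB


open Preadditive in
/-- For a truncation triangle `A₀ → M₀ → B₀` and `X ∈ le`, `(· ≫ i₀)` is bijective. -/
lemma TData.trunc_bij (t : TData D) {A₀ M₀ B₀ : D} {i₀ : A₀ ⟶ M₀} {p₀ : M₀ ⟶ B₀}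
    {δ₀ : B₀ ⟶ A₀⟦(1:ℤ)⟧} (hT : Triangle.mk i₀ p₀ δ₀ ∈ distTriang D)
    (hA : A₀ ∈ t.le) (hB : B₀⟦(1:ℤ)⟧ ∈ t.ge)
    {X : D} (hX : X ∈ t.le) : Function.Bijective (fun ξ : X ⟶ A₀ => ξ ≫ i₀) := by
  constructor
  · intro ξ₁ ξ₂ h
    dsimp at h
    have h0 : (ξ₁ - ξ₂) ≫ (Triangle.mk i₀ p₀ δ₀).invRotate.mor₂ = 0 := by
      show (ξ₁ - ξ₂) ≫ i₀ = 0
      rw [sub_comp, h, sub_self]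
    obtain ⟨u, hu⟩ := Triangle.coyoneda_exact₂ _ (inv_rot_of_distTriang _ hT) _ h0
    have hu0 : u = 0 := TData.shift_neg_vanish (fun g => t.hom_zero g (t.shift_le hX) hB) u
    have : ξ₁ - ξ₂ = 0 := by erw [hu, hu0, zero_comp]; rfl
    rw [← sub_eq_zero]
    exact this
  · intro f
    have hp : f ≫ p₀ = 0 := t.hom_zero _ hX hB
    obtain ⟨g, hg⟩ := Triangle.coyoneda_exact₂ _ hT f hp
    exact ⟨g, hg.symm⟩

/-- The canonical map between the `≤0`-truncations of the source and target of `m ∈ M_t`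
is an isomorphism. -/
lemma TData.trunc_map_iso (t : TData D) {M₀ M₁ : D} (m : M₀ ⟶ M₁) (hm : IsIso (t.tle.map m))
    {A₀ B₀ : D} {i₀ : A₀ ⟶ M₀} {p₀ : M₀ ⟶ B₀} {δ₀ : B₀ ⟶ A₀⟦(1:ℤ)⟧}
    (hT₀ : Triangle.mk i₀ p₀ δ₀ ∈ distTriang D) (hA₀ : A₀ ∈ t.le) (hB₀ : B₀⟦(1:ℤ)⟧ ∈ t.ge)
    {A₁ B₁ : D} {i₁ : A₁ ⟶ M₁} {p₁ : M₁ ⟶ B₁} {δ₁ : B₁ ⟶ A₁⟦(1:ℤ)⟧}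
    (hT₁ : Triangle.mk i₁ p₁ δ₁ ∈ distTriang D) (hA₁ : A₁ ∈ t.le) (hB₁ : B₁⟦(1:ℤ)⟧ ∈ t.ge) :
    ∃ a : A₀ ⟶ A₁, a ≫ i₁ = i₀ ≫ m ∧ IsIso a := by
  have h1 : (i₀ ≫ m) ≫ p₁ = 0 := t.hom_zero _ hA₀ hB₁
  obtain ⟨a0, ha0⟩ := Triangle.coyoneda_exact₂ _ hT₁ (i₀ ≫ m) h1
  have haex : ∃ a : A₀ ⟶ A₁, a ≫ i₁ = i₀ ≫ m := ⟨a0, ha0.symm⟩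
  obtain ⟨a, ha'⟩ := haex
  have key : ∀ {X : D}, X ∈ t.le → Function.Bijective (fun ξ : X ⟶ A₀ => ξ ≫ a) := by
    intro X hX
    have b₀ := t.trunc_bij hT₀ hA₀ hB₀ hX
    have b₁ := t.trunc_bij hT₁ hA₁ hB₁ hX
    have bm := t.bij_comp_le hX m hm
    constructor
    · intro ξ₁ ξ₂ hξ
      dsimp at hξ
      apply b₀.1
      apply bm.1
      show (ξ₁ ≫ i₀) ≫ m = (ξ₂ ≫ i₀) ≫ m
      rw [assoc, assoc, ← ha', ← assoc, ← assoc, hξ]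
    · intro η
      obtain ⟨ζ, hζ⟩ := bm.2 (η ≫ i₁)
      obtain ⟨ξ, hξ⟩ := b₀.2 ζ
      dsimp at hζ hξ
      refine ⟨ξ, b₁.1 ?_⟩
      show (ξ ≫ a) ≫ i₁ = η ≫ i₁
      rw [assoc, ha', ← assoc, hξ, hζ]
  obtain ⟨b, hb⟩ := (key hA₁).2 (𝟙 A₁)
  dsimp at hb
  have hab : a ≫ b = 𝟙 A₀ := by
    apply (key hA₀).1
    show (a ≫ b) ≫ a = (𝟙 A₀) ≫ a
    rw [assoc, hb, comp_id, id_comp]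
  exact ⟨a, ha', ⟨b, hab, hb⟩⟩

/-- The crux: if `γ ≫ e = 0` with `e ∈ E_t`, the source of `γ` has no maps to `D^{≥1}`
(after shifting), and `y ≫ m = e ≫ x` with `m ∈ M_t`, then `γ ≫ y = 0`. -/
lemma TData.crux (t : TData D) {E₀ E₁ M₀ M₁ W : D}
    (e : E₀ ⟶ E₁) (he : IsIso (t.tge.map e))
    (m : M₀ ⟶ M₁) (hm : IsIso (t.tle.map m))
    (γ : W ⟶ E₀) (hγe : γ ≫ e = 0)
    (hW : ∀ ⦃B : D⦄, B⟦(1:ℤ)⟧ ∈ t.ge → ∀ g : W⟦(1:ℤ)⟧ ⟶ B, g = 0)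
    (y : E₀ ⟶ M₀) (x : E₁ ⟶ M₁) (hxy : e ≫ x = y ≫ m) : γ ≫ y = 0 := by
  obtain ⟨A₀, B₀, i₀, p₀, δ₀, hA₀, hB₀, hT₀⟩ := t.tri M₀
  obtain ⟨A₁, B₁, i₁, p₁, δ₁, hA₁, hB₁, hT₁⟩ := t.tri M₁
  have h1 : (γ ≫ y) ≫ p₀ = 0 := by
    rw [assoc]
    exact t.comp_ge_vanish e he γ hγe (y ≫ p₀) hB₀
  obtain ⟨w0, hw0'⟩ := Triangle.coyoneda_exact₂ _ hT₀ (γ ≫ y) h1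
  have hwex : ∃ w : W ⟶ A₀, γ ≫ y = w ≫ i₀ := ⟨w0, hw0'⟩
  obtain ⟨w, hw⟩ := hwex
  obtain ⟨a, ha, hiso⟩ := t.trunc_map_iso m hm hT₀ hA₀ hB₀ hT₁ hA₁ hB₁
  have h3 : (w ≫ a) ≫ (Triangle.mk i₁ p₁ δ₁).invRotate.mor₂ = 0 := by
    show (w ≫ a) ≫ i₁ = 0
    rw [assoc, ha, ← assoc, ← hw, assoc, ← hxy, ← assoc, hγe, zero_comp]
  obtain ⟨u, hu⟩ := Triangle.coyoneda_exact₂ _ (inv_rot_of_distTriang _ hT₁) _ h3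
  have hu0 : u = 0 := TData.shift_neg_vanish (fun g => hW hB₁ g) u
  have hwa : w ≫ a = 0 := by erw [hu, hu0, zero_comp]; rfl
  have hw0 : w = 0 := by
    have := hiso
    rw [← cancel_mono a, hwa, zero_comp]
  rw [hw, hw0, zero_comp]

end Lemmas

section Statements

open Preadditive

variable {D : Type u} [Category.{v} D] [HasZeroObject D] [Preadditive D]
  [HasShift D ℤ] [∀ n : ℤ, (shiftFunctor D n).Additive] [Pretriangulated D]

/-- Lemma 2.7: if `e ∈ E_t` and `m ∈ M_t` then `e ⊥ m` in the sense of homotopy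
orthogonality. -/
theorem Et_homotopy_orthogonal_Mt (t : TData D) {E₀ E₁ M₀ M₁ : D}
    (e : E₀ ⟶ E₁) (m : M₀ ⟶ M₁)
    (he : IsIso (t.tge.map e)) (hm : IsIso (t.tle.map m)) : HOrth e m := by
  intro Ce αe βe hTe Cm αm βm hTm
  have hCm : (Cm⟦(-1:ℤ)⟧)⟦(1:ℤ)⟧ ∈ t.ge := t.shift_cone_m_mem_ge m αm βm hTm hm
  constructor
  · intro φ
    have hφ : φ = 0 := t.cone_e_hom_vanish e αe βe hTe he hCm φ
    rw [hφ, zero_comp, comp_zero]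
  · intro φ₁ φ₂ h12
    dsimp at h12
    rw [← sub_eq_zero]
    have hψ0 : αe ≫ (φ₁ - φ₂) ≫ βm = 0 := by
      rw [sub_comp, comp_sub, h12, sub_self]
    set ψ := φ₁ - φ₂ with hψdef
    have h1 : (αe ≫ ψ) ≫ (Triangle.mk m αm βm).rotate.mor₂ = 0 := by
      show (αe ≫ ψ) ≫ βm = 0
      rw [assoc]
      exact hψ0
    obtain ⟨x0, hx0⟩ := Triangle.coyoneda_exact₂ _ (rot_of_distTriang _ hTm) _ h1
    have hxex : ∃ x : E₁ ⟶ M₁, αe ≫ ψ = x ≫ αm := ⟨x0, hx0⟩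
    obtain ⟨x, hx⟩ := hxex
    have h2 : (e ≫ x) ≫ αm = 0 := by
      rw [assoc, ← hx, ← assoc]
      have h2' : e ≫ αe = 0 := comp_distTriang_mor_zero₁₂ _ hTe
      rw [h2', zero_comp]
    obtain ⟨y0, hy0⟩ := Triangle.coyoneda_exact₂ _ hTm _ h2
    have hyex : ∃ y : E₀ ⟶ M₀, e ≫ x = y ≫ m := ⟨y0, hy0⟩
    obtain ⟨y, hy⟩ := hyex
    have hT' := inv_rot_of_distTriang _ hTe
    set γ : Ce⟦(-1:ℤ)⟧ ⟶ E₀ := (Triangle.mk e αe βe).invRotate.mor₁ with hγdef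
    have hγe : γ ≫ e = 0 := comp_distTriang_mor_zero₁₂ _ hT'
    have hWv : ∀ ⦃B : D⦄, B⟦(1:ℤ)⟧ ∈ t.ge → ∀ g : (Ce⟦(-1:ℤ)⟧)⟦(1:ℤ)⟧ ⟶ B, g = 0 := by
      intro B hB g
      have h3 : (shiftEquiv D (1:ℤ)).counitIso.inv.app Ce ≫ g = 0 :=
        t.cone_e_hom_vanish e αe βe hTe he hB _
      exact (cancel_epi ((shiftEquiv D (1:ℤ)).counitIso.inv.app Ce)).1 (h3.trans comp_zero.symm)
    have hγy : γ ≫ y = 0 := t.crux e he m hm γ hγe hWv y x hy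
    obtain ⟨l0, hl0⟩ := Triangle.yoneda_exact₂ _ hT' y hγy
    have hlex : ∃ l : E₁ ⟶ M₀, y = e ≫ l := ⟨l0, hl0⟩
    obtain ⟨l, hl'⟩ := hlex
    have h4 : e ≫ (x - l ≫ m) = 0 := by
      rw [comp_sub, hy, hl', assoc, sub_self]
    obtain ⟨g, hg⟩ := Triangle.yoneda_exact₂ _ hTe _ h4
    have hg' : x - l ≫ m = αe ≫ g := hg
    have hgα : g ≫ αm = 0 := by
      obtain ⟨A, B, i, p, δ, hA, hB, hT⟩ := t.tri Ce
      have hp : p = 0 := t.cone_e_hom_vanish e αe βe hTe he hB p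
      have h5 : i ≫ (g ≫ αm) = 0 := by
        erw [← assoc]
        exact t.le_comp_vanish m hm αm (comp_distTriang_mor_zero₁₂ _ hTm) (i ≫ g) hA
      obtain ⟨h', hh'⟩ := Triangle.yoneda_exact₂ _ hT (g ≫ αm) h5
      erw [hh']
      show p ≫ h' = 0
      erw [hp, zero_comp]
    have hαψ : αe ≫ ψ = 0 := by
      have hxe : x = αe ≫ g + l ≫ m := sub_eq_iff_eq_add.mp hg'
      have hmα : m ≫ αm = 0 := comp_distTriang_mor_zero₁₂ _ hTm
      erw [hx, hxe, add_comp, assoc, assoc, hgα, hmα, comp_zero, comp_zero, add_zero]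
    obtain ⟨h, hh⟩ := Triangle.yoneda_exact₃ _ hTe ψ hαψ
    set h₀ : E₀ ⟶ Cm⟦(-1:ℤ)⟧ :=
      (shiftEquiv D (1:ℤ)).unitIso.hom.app E₀ ≫ h⟦(-1:ℤ)⟧' with hh₀
    have h6 : (βe⟦(-1:ℤ)⟧' ≫ (shiftEquiv D (1:ℤ)).unitIso.inv.app E₀) ≫ h₀ = 0 := by
      have hne : (-(βe⟦(-1:ℤ)⟧' ≫ (shiftEquiv D (1:ℤ)).unitIso.inv.app E₀)) ≫ e = 0 :=
        comp_distTriang_mor_zero₁₂ _ hT'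
      have hγ'e : (βe⟦(-1:ℤ)⟧' ≫ (shiftEquiv D (1:ℤ)).unitIso.inv.app E₀) ≫ e = 0 := by
        simpa using hne
      exact t.comp_ge_vanish e he _ hγ'e h₀ hCm
    have key : βe⟦(-1:ℤ)⟧' ≫ h⟦(-1:ℤ)⟧' = 0 := by
      rw [hh₀] at h6
      erw [assoc, Iso.inv_hom_id_app_assoc] at h6; exact h6
    have hβh : βe ≫ h = 0 := by
      apply (shiftFunctor D (-1:ℤ)).map_injective
      erw [Functor.map_comp, key, Functor.map_zero]
    have hh2 : ψ = βe ≫ h := hh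
    rw [hh2]
    exact hβh

end Statements
end
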